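/- arXiv:2306.02347 — 6 statements merged into one kernel-verified Lean document; each statement's English description precedes it below -/
import Mathlib

section
/- For every sequence λ : ℕ → ℝ with ∑ⱼ λⱼ² < ∞, the infinite product ∏ⱼ (1 + λⱼ)e^{−λⱼ} converges: the partial products ∏_{j<N} (1 + λⱼ)e^{−λⱼ} tend to a finite limit as N → ∞. -/
open Filter

/-- **Convergence of the Carleman–Fredholm product.**
For every sequence `λ : ℕ → ℝ` with `∑ⱼ λⱼ² < ∞`, the partial products
`∏_{j<N} (1 + λⱼ) e^{−λⱼ}` tend to a finite limit as `N → ∞`. -/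
theorem stmt_1 (l : ℕ → ℝ) (hl : Summable fun j => (l j) ^ 2) :
    ∃ L : ℝ,
      Tendsto (fun N => ∏ j ∈ Finset.range N, (1 + l j) * Real.exp (-(l j)))
        atTop (nhds L) := by
  set f : ℕ → ℝ := fun j => (1 + l j) * Real.exp (-(l j)) with hf
  -- the terms tend to 0, so eventually |l j| < 1/2
  have hsq : Tendsto (fun j => (l j) ^ 2) atTop (nhds 0) := hl.tendsto_atTop_zero
  have hsmall : ∀ᶠ j in atTop, |l j| < 1/2 := by
    have := hsq.eventually (eventually_lt_nhds (show (0:ℝ) < 1/4 by norm_num))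
    filter_upwards [this] with j hj
    nlinarith [sq_abs (l j), abs_nonneg (l j)]
  obtain ⟨N₀, hN₀⟩ := eventually_atTop.1 hsmall
  -- log of the shifted terms
  set g : ℕ → ℝ := fun j => Real.log (1 + l (N₀ + j)) - l (N₀ + j) with hg
  have hpos : ∀ j, 0 < 1 + l (N₀ + j) := by
    intro j
    have := hN₀ (N₀ + j) (Nat.le_add_right _ _)
    have := abs_lt.1 this
    linarith [this.1]
  have hexp : ∀ j, Real.exp (g j) = f (N₀ + j) := by
    intro j
    rw [hg, Real.exp_sub, Real.exp_log (hpos j), hf]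
    simp [Real.exp_neg, div_eq_mul_inv]
  -- summability of g by comparison with 2 * l²
  have hgsum : Summable g := by
    have hsq' : Summable fun j => 2 * (l (N₀ + j)) ^ 2 := by
      have : Summable fun j => (l (j + N₀)) ^ 2 := (summable_nat_add_iff N₀).2 hl
      exact ((summable_nat_add_iff N₀).2 hl |>.mul_left 2).congr (by
        intro j; rw [Nat.add_comm])
    refine Summable.of_abs (hsq'.of_nonneg_of_le (fun j => abs_nonneg _) ?_)
    intro j
    have habs := hN₀ (N₀ + j) (Nat.le_add_right _ _)
    have key := Real.abs_log_sub_add_sum_range_le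
      (x := -(l (N₀ + j))) (by rw [abs_neg]; linarith) 1
    simp only [Finset.sum_range_one, pow_one, Nat.cast_zero, zero_add,
      sub_neg_eq_add, div_one] at key
    have h1 : |g j| = |(-(l (N₀ + j))) + Real.log (1 + l (N₀ + j))| := by
      rw [hg]; dsimp only; congr 1; ring
    rw [← h1] at key
    have h2 : |(-(l (N₀ + j)))| ^ (1 + 1) / (1 - |(-(l (N₀ + j)))|)
        ≤ 2 * (l (N₀ + j)) ^ 2 := by
      rw [abs_neg]
      have h3 : (0:ℝ) < 1 - |l (N₀ + j)| := by linarith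
      rw [div_le_iff₀ h3]
      have h4 : |l (N₀ + j)| ^ (1 + 1) = (l (N₀ + j)) ^ 2 := sq_abs _
      rw [h4]
      nlinarith [mul_nonneg (sq_nonneg (l (N₀ + j)))
        (by linarith : (0:ℝ) ≤ 1 - 2 * |l (N₀ + j)|)]
    exact key.trans h2
  -- partial sums of g converge
  obtain ⟨S, hS⟩ := hgsum
  have hSsum : Tendsto (fun k => ∑ j ∈ Finset.range k, g j) atTop (nhds S) :=
    hS.tendsto_sum_nat
  -- hence tail partial products converge
  have htail : Tendsto (fun k => ∏ j ∈ Finset.range k, f (N₀ + j)) atTop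
      (nhds (Real.exp S)) := by
    have : (fun k => ∏ j ∈ Finset.range k, f (N₀ + j))
        = fun k => Real.exp (∑ j ∈ Finset.range k, g j) := by
      funext k
      rw [Real.exp_sum]
      exact (Finset.prod_congr rfl fun j _ => (hexp j).symm)
    rw [this]
    exact (Real.continuous_exp.tendsto S).comp hSsum
  refine ⟨(∏ j ∈ Finset.range N₀, f j) * Real.exp S, ?_⟩
  have hsub : Tendsto (fun N => N - N₀) atTop atTop :=
    tendsto_sub_atTop_nat N₀
  have hmain : Tendsto (fun N => (∏ j ∈ Finset.range N₀, f j) *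
      ∏ j ∈ Finset.range (N - N₀), f (N₀ + j)) atTop
      (nhds ((∏ j ∈ Finset.range N₀, f j) * Real.exp S)) :=
    (htail.comp hsub).const_mul _
  refine hmain.congr' ?_
  filter_upwards [eventually_ge_atTop N₀] with N hN
  rw [← Finset.prod_range_add f N₀ (N - N₀), Nat.add_sub_cancel' hN]
end

section
/- Let λ : ℕ → ℝ be a sequence with λⱼ > −1 for all j and ∑ⱼ λⱼ² < ∞, and let s := sup_j λⱼ (which is finite). Then the infinite product ∏ⱼ e^{λⱼ}(1 + λⱼ)^{−1} converges and satisfies ∏ⱼ e^{λⱼ}(1 + λⱼ)^{−1} ≥ 1 + (∑ⱼ λⱼ²)/(3(1 + s)). -/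
open Filter

lemma key_ineq {x s : ℝ} (hx : -1 < x) (hxs : x ≤ s) (hs : 0 ≤ s) :
    x ^ 2 / (3 * (1 + s)) ≤ x - Real.log (1 + x) := by
  have h1x : (0:ℝ) < 1 + x := by linarith
  set v : ℝ := (1 + x) ^ ((1:ℝ)/3) with hv
  have hv0 : 0 < v := Real.rpow_pos_of_pos h1x _
  have hv3 : v ^ (3:ℕ) = 1 + x := by
    rw [hv, ← Real.rpow_natCast ((1 + x) ^ ((1:ℝ)/3)) 3, ← Real.rpow_mul h1x.le]
    norm_num
  have hxv : x = v ^ 3 - 1 := by rw [hv3]; ring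
  have hlog : Real.log (1 + x) = 3 * Real.log v := by
    rw [hv, Real.log_rpow h1x]; ring
  have hlv : Real.log v ≤ v - 1 := Real.log_le_sub_one_of_pos hv0
  have h3a : (0:ℝ) < 3 * (1 + s) := by linarith
  rw [div_le_iff₀ h3a]
  have hstep : x - 3 * v + 3 ≤ x - Real.log (1 + x) := by rw [hlog]; linarith
  have key : x ^ 2 ≤ (x - 3 * v + 3) * (3 * (1 + s)) := by
    rw [hxv]
    rcases le_total v 1 with h | h
    · have hpoly : 0 ≤ v ^ 3 + 3 * v ^ 2 + 6 * v + 5 := by nlinarith [hv0.le, sq_nonneg v]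
      have hA : 0 ≤ s * ((v - 1) ^ 2 * (v + 2)) :=
        mul_nonneg hs (mul_nonneg (sq_nonneg _) (by linarith))
      have hB : 0 ≤ (v - 1) ^ 2 * ((1 - v) * (v ^ 3 + 3 * v ^ 2 + 6 * v + 5)) :=
        mul_nonneg (sq_nonneg _) (mul_nonneg (by linarith) hpoly)
      nlinarith [hA, hB]
    · have hA : 0 ≤ (s - (v ^ 3 - 1)) * ((v - 1) ^ 2 * (v + 2)) := by
        have : v ^ 3 - 1 ≤ s := by rw [← hxv]; exact hxs
        exact mul_nonneg (by linarith) (mul_nonneg (sq_nonneg _) (by linarith))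
      have hB : 0 ≤ (v - 1) ^ 2 * ((v - 1) * (2 * v ^ 3 + 6 * v ^ 2 + 3 * v + 1)) :=
        mul_nonneg (sq_nonneg _) (mul_nonneg (by linarith) (by nlinarith))
      nlinarith [hA, hB]
  calc x ^ 2 ≤ (x - 3 * v + 3) * (3 * (1 + s)) := key
    _ ≤ (x - Real.log (1 + x)) * (3 * (1 + s)) := by
        apply mul_le_mul_of_nonneg_right hstep h3a.le

/-- Let `λ : ℕ → ℝ` with `λⱼ > −1` for all `j` and `∑ⱼ λⱼ² < ∞`, and let
`s := sup_j λⱼ`.  Then the infinite product `∏ⱼ e^{λⱼ} (1 + λⱼ)⁻¹` converges and its limit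
is at least `1 + (∑ⱼ λⱼ²)/(3(1 + s))`. -/
theorem stmt_3 (l : ℕ → ℝ) (hl : ∀ j, -1 < l j) (hsum : Summable fun j => (l j) ^ 2) :
    ∃ L : ℝ,
      Tendsto (fun N => ∏ j ∈ Finset.range N, Real.exp (l j) / (1 + l j))
        atTop (nhds L) ∧
      1 + (∑' j, (l j) ^ 2) / (3 * (1 + ⨆ j, l j)) ≤ L := by
  set g : ℕ → ℝ := fun j => l j - Real.log (1 + l j) with hg
  have h1l : ∀ j, (0:ℝ) < 1 + l j := fun j => by linarith [hl j]
  have hg0 : ∀ j, 0 ≤ g j := by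
    intro j
    have := Real.log_le_sub_one_of_pos (h1l j)
    simp only [hg]; linarith
  -- l tends to 0
  have hl2 : Tendsto (fun j => l j ^ 2) atTop (nhds 0) := hsum.tendsto_atTop_zero
  have habs : Tendsto (fun j => |l j|) atTop (nhds 0) := by
    have := (Real.continuous_sqrt.tendsto 0).comp hl2
    simpa [Function.comp_def, Real.sqrt_sq_eq_abs] using this
  have hl0 : Tendsto l atTop (nhds 0) := by
    rwa [tendsto_zero_iff_abs_tendsto_zero]
  have hbdd : BddAbove (Set.range l) := hl0.bddAbove_range
  set s : ℝ := ⨆ j, l j with hsdef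
  have hls : ∀ j, l j ≤ s := fun j => le_ciSup hbdd j
  have hs0 : 0 ≤ s := le_of_tendsto hl0 (Eventually.of_forall hls)
  have hkey : ∀ j, l j ^ 2 / (3 * (1 + s)) ≤ g j := fun j => key_ineq (hl j) (hls j) hs0
  -- summability of g
  have hgsum : Summable g := by
    obtain ⟨N, hN⟩ := eventually_atTop.1 (habs.eventually_le_const (by norm_num : (0:ℝ) < 1/2))
    rw [← summable_nat_add_iff N]
    apply Summable.of_nonneg_of_le (fun j => hg0 _) _ ((summable_nat_add_iff N).2 (hsum.mul_left 2))
    intro j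
    have hNj : |l (j + N)| ≤ 1/2 := hN (j + N) (Nat.le_add_left N j)
    set x := l (j + N)
    have hx1 : (1:ℝ)/2 ≤ 1 + x := by
      cases abs_le.1 hNj with
      | intro h1 h2 => linarith
    have hx0 : (0:ℝ) < 1 + x := by linarith
    -- log (1+x) ≥ x/(1+x) = 1 - (1+x)⁻¹
    have hlow : 1 - (1 + x)⁻¹ ≤ Real.log (1 + x) := by
      have h' := Real.log_le_sub_one_of_pos (inv_pos.2 hx0)
      rw [Real.log_inv] at h'
      linarith
    have : g (j + N) ≤ x - (1 - (1 + x)⁻¹) := by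
      simp only [hg]; linarith
    have heq : x - (1 - (1 + x)⁻¹) = x ^ 2 / (1 + x) := by
      field_simp; ring
    have hfin : x ^ 2 / (1 + x) ≤ 2 * x ^ 2 := by
      rw [div_le_iff₀ hx0]
      nlinarith [sq_nonneg x]
    calc g (j + N) ≤ x ^ 2 / (1 + x) := by rw [← heq]; exact this
      _ ≤ 2 * x ^ 2 := hfin
  refine ⟨Real.exp (∑' j, g j), ?_, ?_⟩
  · have hprod : ∀ N, ∏ j ∈ Finset.range N, Real.exp (l j) / (1 + l j)
        = Real.exp (∑ j ∈ Finset.range N, g j) := by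
      intro N
      rw [Real.exp_sum]
      refine Finset.prod_congr rfl fun j _ => ?_
      simp only [hg]
      rw [Real.exp_sub, Real.exp_log (h1l j)]
    have := (Real.continuous_exp.tendsto _).comp hgsum.hasSum.tendsto_sum_nat
    simpa [Function.comp_def, hprod] using this
  · have hTsum : Summable fun j => l j ^ 2 / (3 * (1 + s)) := hsum.div_const _
    have h2 : ∑' j, l j ^ 2 / (3 * (1 + s)) ≤ ∑' j, g j := Summable.tsum_le_tsum hkey hTsum hgsum
    have h1 : (∑' j, l j ^ 2) / (3 * (1 + s)) = ∑' j, l j ^ 2 / (3 * (1 + s)) :=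
      (tsum_div_const).symm
    have h3 := Real.add_one_le_exp (∑' j, g j)
    rw [hsdef] at *
    linarith [h1 ▸ h2]
end

section
/- Let λ : ℕ → ℝ satisfy ∑ᵢ λᵢ² < ∞ and 1 + λᵢ ≥ c for all i, for some c > 0. Define λ̃ᵢ := (1 + λᵢ)^{−1} − 1. Let r : ℕ → ℝ be such that ∑ᵢ |λ̃ᵢ rᵢ| < ∞. Then the series ∑ᵢ [ (λᵢ/(1 + λᵢ))(1 + rᵢ) − log(1 + λᵢ) ], ∑ᵢ λ̃ᵢ rᵢ, and ∑ᵢ [ log(1 + λ̃ᵢ) − λ̃ᵢ ] all converge absolutely, and (1/2) ∑ᵢ [ (λᵢ/(1 + λᵢ))(1 + rᵢ) − log(1 + λᵢ) ] = (1/2) [ −∑ᵢ λ̃ᵢ rᵢ + ∑ᵢ ( log(1 + λ̃ᵢ) − λ̃ᵢ ) ]. -/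
lemma aux_bound {x : ℝ} (hx : |x| ≤ 1/2) : |x / (1 + x) - Real.log (1 + x)| ≤ 4 * x ^ 2 := by
  have hx1 : |(-x)| < 1 := by rw [abs_neg]; linarith
  have h := Real.abs_log_sub_add_sum_range_le hx1 1
  simp [Finset.sum_range_one] at h
  have habs := abs_le.mp hx
  have h1x : (1:ℝ)/2 ≤ 1 + x := by linarith [habs.1]
  have h1x0 : (0:ℝ) < 1 + x := by linarith
  have hlog : |Real.log (1 + x) - x| ≤ 2 * x ^ 2 := by
    have hden2 : (1:ℝ)/2 ≤ 1 - |x| := by linarith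
    have hd : x ^ 2 / (1 - |x|) ≤ x ^ 2 / (1/2) :=
      div_le_div_of_nonneg_left (by positivity) (by norm_num) hden2
    calc |Real.log (1 + x) - x| = |-x + Real.log (1 + x)| := by rw [sub_eq_neg_add]
      _ ≤ x ^ 2 / (1 - |x|) := h
      _ ≤ x ^ 2 / (1/2) := hd
      _ = 2 * x ^ 2 := by ring
  have hfrac : |x - x / (1 + x)| ≤ 2 * x ^ 2 := by
    have hfe : x - x / (1 + x) = x ^ 2 / (1 + x) := by field_simp; ring
    rw [hfe, abs_div, abs_of_pos h1x0, abs_of_nonneg (by positivity : (0:ℝ) ≤ x ^ 2)]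
    rw [div_le_iff₀ h1x0]; nlinarith
  calc |x / (1 + x) - Real.log (1 + x)|
      = |(x - Real.log (1 + x)) - (x - x / (1 + x))| := by ring_nf
    _ ≤ |x - Real.log (1 + x)| + |x - x / (1 + x)| := abs_sub _ _
    _ ≤ 2 * x ^ 2 + 2 * x ^ 2 := by
        rw [abs_sub_comm x (Real.log (1 + x))]; exact add_le_add hlog hfrac
    _ = 4 * x ^ 2 := by ring

/-- Let `λ : ℕ → ℝ` satisfy `∑ᵢ λᵢ² < ∞` and `1 + λᵢ ≥ c > 0` for all `i`.  Define
`λ̃ᵢ := (1 + λᵢ)⁻¹ − 1`, and let `r : ℕ → ℝ` with `∑ᵢ |λ̃ᵢ rᵢ| < ∞`.  Then the series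
`∑ᵢ [ (λᵢ/(1 + λᵢ))(1 + rᵢ) − log(1 + λᵢ) ]`, `∑ᵢ λ̃ᵢ rᵢ` and
`∑ᵢ [ log(1 + λ̃ᵢ) − λ̃ᵢ ]` converge absolutely and
`(1/2) ∑ᵢ [ (λᵢ/(1 + λᵢ))(1 + rᵢ) − log(1 + λᵢ) ]
  = (1/2) [ −∑ᵢ λ̃ᵢ rᵢ + ∑ᵢ ( log(1 + λ̃ᵢ) − λ̃ᵢ ) ]`. -/
theorem stmt_4 (l r : ℕ → ℝ) {c : ℝ} (hc : 0 < c) (hl : ∀ i, c ≤ 1 + l i)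
    (hsum : Summable fun i => (l i) ^ 2)
    (hr : Summable fun i => |((1 + l i)⁻¹ - 1) * r i|) :
    Summable (fun i => |l i / (1 + l i) * (1 + r i) - Real.log (1 + l i)|) ∧
    Summable (fun i => |((1 + l i)⁻¹ - 1) * r i|) ∧
    Summable (fun i => |Real.log (1 + ((1 + l i)⁻¹ - 1)) - ((1 + l i)⁻¹ - 1)|) ∧
    (1 / 2) * (∑' i, (l i / (1 + l i) * (1 + r i) - Real.log (1 + l i))) =
      (1 / 2) * (-(∑' i, ((1 + l i)⁻¹ - 1) * r i) +
        ∑' i, (Real.log (1 + ((1 + l i)⁻¹ - 1)) - ((1 + l i)⁻¹ - 1))) := by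
  have hpos : ∀ i, (0:ℝ) < 1 + l i := fun i => lt_of_lt_of_le hc (hl i)
  have hne : ∀ i, (1 + l i) ≠ 0 := fun i => (hpos i).ne'
  have hkey : ∀ i, (1 + l i)⁻¹ - 1 = -(l i / (1 + l i)) := by
    intro i
    rw [inv_eq_one_div, div_sub_one (hne i)]
    ring_nf
  have hone : ∀ i, 1 + ((1 + l i)⁻¹ - 1) = (1 + l i)⁻¹ := fun i => by ring
  have hlog : ∀ i, Real.log (1 + ((1 + l i)⁻¹ - 1)) = -Real.log (1 + l i) := by
    intro i; rw [hone i, Real.log_inv]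
  have heq3 : ∀ i, |Real.log (1 + ((1 + l i)⁻¹ - 1)) - ((1 + l i)⁻¹ - 1)|
      = |l i / (1 + l i) - Real.log (1 + l i)| := by
    intro i
    rw [hlog i, hkey i]; congr 1; ring
  have hg : Summable (fun i => |l i / (1 + l i) - Real.log (1 + l i)|) := by
    have hev : ∀ᶠ i in Filter.atTop, (l i) ^ 2 ≤ 1/4 :=
      Filter.Tendsto.eventually_le_const (by norm_num : (0:ℝ) < 1/4)
        hsum.tendsto_atTop_zero
    apply Summable.of_norm_bounded_eventually_nat (g := fun i => 4 * (l i) ^ 2)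
      (hsum.mul_left 4)
    filter_upwards [hev] with i hi
    have habs : |l i| ≤ 1/2 := by
      nlinarith [abs_nonneg (l i), sq_abs (l i)]
    rw [Real.norm_eq_abs, abs_abs]
    exact aux_bound habs
  have hterm : ∀ i, l i / (1 + l i) * (1 + r i) - Real.log (1 + l i)
      = -(((1 + l i)⁻¹ - 1) * r i) +
        (Real.log (1 + ((1 + l i)⁻¹ - 1)) - ((1 + l i)⁻¹ - 1)) := by
    intro i
    rw [hlog i, hkey i]; ring
  have hg' : Summable (fun i => Real.log (1 + ((1 + l i)⁻¹ - 1)) - ((1 + l i)⁻¹ - 1)) := by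
    rw [← summable_abs_iff]
    exact hg.congr fun i => (heq3 i).symm
  have hr' : Summable (fun i => ((1 + l i)⁻¹ - 1) * r i) := summable_abs_iff.mp hr
  have h1 : Summable (fun i => |l i / (1 + l i) * (1 + r i) - Real.log (1 + l i)|) := by
    rw [summable_abs_iff]
    exact (hr'.neg.add hg').congr fun i => (hterm i).symm
  refine ⟨h1, hr, hg.congr fun i => (heq3 i).symm, ?_⟩
  congr 1
  rw [tsum_congr hterm, Summable.tsum_add hr'.neg hg', tsum_neg]
end

section
/- Let A and Â be bounded positive (self-adjoint, nonnegative) operators on a real Hilbert space H with Â − A Hilbert–Schmidt, and let ε > 0. Then: (i) ‖(εI + Â)^{−1/2} − (εI + A)^{−1/2}‖ ≤ ‖Â − A‖₂ / ε^{3/2}; and (ii) ‖[ (εI + Â)^{−1/2} − (εI + A)^{−1/2} ] A^{1/2}‖ ≤ ‖Â − A‖₂ / ε, where ‖·‖ denotes the operator norm. -/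
open RealInnerProductSpace

section Stmt9Aux

variable {E : Type*} [NormedAddCommGroup E] [InnerProductSpace ℝ E] [CompleteSpace E]

lemma stmt9_cs (T : E →L[ℝ] E) (hT : T.IsPositive) (u v : E) :
    ⟪u, T v⟫ ^ 2 ≤ ⟪u, T u⟫ * ⟪v, T v⟫ := by
  have hsym : ∀ x y : E, ⟪T x, y⟫ = ⟪x, T y⟫ := fun x y => hT.isSelfAdjoint.isSymmetric x y
  have hpos : ∀ x : E, 0 ≤ ⟪x, T x⟫ := by
    intro x
    have := hT.inner_nonneg_left x
    simpa [real_inner_comm] using this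
  have key : ∀ t : ℝ, 0 ≤ ⟪v, T v⟫ * (t * t) + (2 * ⟪u, T v⟫) * t + ⟪u, T u⟫ := by
    intro t
    have h0 := hpos (u + t • v)
    have expand : ⟪u + t • v, T (u + t • v)⟫
        = ⟪u, T u⟫ + t * ⟪u, T v⟫ + (t * ⟪v, T u⟫ + t * t * ⟪v, T v⟫) := by
      simp [map_add, inner_add_left, inner_add_right, real_inner_smul_left,
        real_inner_smul_right, map_smul]
      ring
    have hvu : ⟪v, T u⟫ = ⟪u, T v⟫ := by
      rw [← hsym u v, real_inner_comm]
    rw [expand, hvu] at h0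
    nlinarith [h0]
  have := discrim_le_zero key
  rw [discrim] at this
  nlinarith [this]

lemma stmt9_sa_norm_le (T : E →L[ℝ] E) (hT : IsSelfAdjoint T) {M : ℝ} (hM : 0 ≤ M)
    (h : ∀ x : E, |⟪x, T x⟫| ≤ M * ‖x‖ ^ 2) : ‖T‖ ≤ M := by
  refine T.opNorm_le_bound hM (fun x => ?_)
  by_cases hTx : T x = 0
  · simp [hTx]; positivity
  have hx : x ≠ 0 := by rintro rfl; simp at hTx
  have hTxn : 0 < ‖T x‖ := norm_pos_iff.mpr hTx
  have hxn : 0 < ‖x‖ := norm_pos_iff.mpr hx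
  set y : E := (‖x‖ / ‖T x‖) • T x with hy
  have hyn : ‖y‖ = ‖x‖ := by
    rw [hy, norm_smul]
    rw [Real.norm_eq_abs, abs_of_nonneg (by positivity)]
    field_simp
  have hsym : ∀ u v : E, ⟪T u, v⟫ = ⟪u, T v⟫ := fun u v => hT.isSymmetric u v
  have key : ⟪x + y, T (x + y)⟫ - ⟪x - y, T (x - y)⟫ = 4 * ⟪T x, y⟫ := by
    have h1 : ⟪y, T x⟫ = ⟪T x, y⟫ := real_inner_comm _ _
    have h2 : ⟪x, T y⟫ = ⟪T x, y⟫ := (hsym x y).symm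
    simp only [map_add, map_sub, inner_add_left, inner_add_right, inner_sub_left,
      inner_sub_right]
    linarith [h1, h2]
  have hb : 4 * ⟪T x, y⟫ ≤ M * ‖x + y‖ ^ 2 + M * ‖x - y‖ ^ 2 := by
    have h1 := h (x + y)
    have h2 := h (x - y)
    have := abs_le.1 h1
    have := abs_le.1 h2
    nlinarith [abs_le.1 h1, abs_le.1 h2, key]
  have hpar : ‖x + y‖ ^ 2 + ‖x - y‖ ^ 2 = 2 * (‖x‖ ^ 2 + ‖y‖ ^ 2) := by
    have := parallelogram_law_with_norm ℝ x y
    nlinarith [this]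
  have hinner : ⟪T x, y⟫ = ‖x‖ * ‖T x‖ := by
    rw [hy, real_inner_smul_right, real_inner_self_eq_norm_sq]
    field_simp
  rw [hinner] at hb
  rw [hyn] at hpar
  nlinarith [hb, hpar]

lemma stmt9_inv (ε : ℝ) (hε : 0 < ε) (B QB : E →L[ℝ] E) (hB : 0 ≤ B) (hQBpos : 0 ≤ QB)
    (hsq : QB * QB = ε • (1 : E →L[ℝ] E) + B) :
    ∃ R : E →L[ℝ] E, QB * R = 1 ∧ R * QB = 1 ∧ Ring.inverse QB = R ∧
      ‖R‖ ≤ (Real.sqrt ε)⁻¹ ∧ R.IsPositive ∧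
      (∀ x : E, Real.sqrt ε * ‖x‖ ^ 2 ≤ ⟪x, QB x⟫) ∧
      (∀ u : E, ⟪u, B u⟫ ≤ ‖QB u‖ ^ 2) := by
  rw [ContinuousLinearMap.nonneg_iff_isPositive] at hB hQBpos
  have hsε : 0 < Real.sqrt ε := Real.sqrt_pos.mpr hε
  have hsym : ∀ x y : E, ⟪QB x, y⟫ = ⟪x, QB y⟫ := fun x y => hQBpos.isSelfAdjoint.isSymmetric x y
  have hBnn : ∀ x : E, 0 ≤ ⟪x, B x⟫ := fun x => by
    simpa [real_inner_comm] using hB.inner_nonneg_left x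
  have hQBnn : ∀ x : E, 0 ≤ ⟪x, QB x⟫ := fun x => by
    simpa [real_inner_comm] using hQBpos.inner_nonneg_left x
  have hsq' : ∀ x : E, ‖QB x‖ ^ 2 = ε * ‖x‖ ^ 2 + ⟪x, B x⟫ := by
    intro x
    have : ⟪QB x, QB x⟫ = ⟪x, (QB * QB) x⟫ := by
      rw [ContinuousLinearMap.mul_apply]; exact hsym x (QB x)
    rw [← real_inner_self_eq_norm_sq, this, hsq]
    simp [inner_add_right, real_inner_smul_right, real_inner_self_eq_norm_sq]
  have hsq_ge : ∀ x : E, ε * ‖x‖ ^ 2 ≤ ‖QB x‖ ^ 2 := fun x => by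
    have := hBnn x; rw [hsq' x]; linarith
  have hlow : ∀ x : E, Real.sqrt ε * ‖x‖ ≤ ‖QB x‖ := by
    intro x
    have h1 : Real.sqrt (ε * ‖x‖ ^ 2) ≤ Real.sqrt (‖QB x‖ ^ 2) :=
      Real.sqrt_le_sqrt (hsq_ge x)
    rwa [Real.sqrt_mul hε.le, Real.sqrt_sq (norm_nonneg _), Real.sqrt_sq (norm_nonneg _)] at h1
  have hinj : Function.Injective QB := by
    intro x y hxy
    have h1 := hlow (x - y)
    rw [map_sub, hxy, sub_self, norm_zero] at h1
    have : ‖x - y‖ ≤ 0 := by nlinarith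
    have : x - y = 0 := by
      rw [← norm_le_zero_iff]; exact this
    exact sub_eq_zero.mp this
  have hker : LinearMap.ker (QB : E →ₗ[ℝ] E) = ⊥ := LinearMap.ker_eq_bot.mpr hinj
  have hanti : AntilipschitzWith ((Real.sqrt ε)⁻¹).toNNReal QB := by
    refine QB.antilipschitz_of_bound (fun x => ?_)
    rw [Real.coe_toNNReal _ (by positivity)]
    rw [inv_mul_eq_div, le_div_iff₀ hsε, mul_comm]
    exact hlow x
  have hclosed : IsClosed (LinearMap.range (QB : E →ₗ[ℝ] E) : Set E) := by
    rw [LinearMap.coe_range]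
    exact hanti.isClosed_range QB.uniformContinuous
  haveI : CompleteSpace (LinearMap.range (QB : E →ₗ[ℝ] E)) := hclosed.completeSpace_coe
  have horth : (LinearMap.range (QB : E →ₗ[ℝ] E))ᗮ = ⊥ := by
    rw [Submodule.eq_bot_iff]
    intro y hy
    have hQBy : QB y = 0 := by
      have h0 : ⟪QB (QB y), y⟫ = 0 := by
        exact hy (QB (QB y)) (LinearMap.mem_range_self _ _)
      rw [hsym (QB y) y] at h0
      have h2 : ‖QB y‖ ^ 2 = 0 := by rw [← real_inner_self_eq_norm_sq]; exact h0
      rwa [sq_eq_zero_iff, norm_eq_zero] at h2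
    have h1 := hlow y
    rw [hQBy, norm_zero] at h1
    have : ‖y‖ ≤ 0 := by nlinarith
    rw [← norm_le_zero_iff]; exact this
  have hrange : LinearMap.range (QB : E →ₗ[ℝ] E) = ⊤ := Submodule.orthogonal_eq_bot_iff.mp horth
  set Qe := ContinuousLinearEquiv.ofBijective QB hker hrange with hQe
  set R : E →L[ℝ] E := (Qe.symm : E →L[ℝ] E) with hR
  have hQe_coe : ∀ x : E, Qe x = QB x := fun x =>
    congrFun (ContinuousLinearEquiv.coeFn_ofBijective QB hker hrange) x
  have h1 : QB * R = 1 := by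
    ext x
    have : QB (Qe.symm x) = Qe (Qe.symm x) := (hQe_coe _).symm
    simp only [ContinuousLinearMap.mul_apply, ContinuousLinearMap.one_apply,
      ContinuousLinearEquiv.coe_coe, hR]
    rw [this, Qe.apply_symm_apply]
  have h2 : R * QB = 1 := by
    ext x
    have : QB x = Qe x := (hQe_coe _).symm
    simp only [ContinuousLinearMap.mul_apply, ContinuousLinearMap.one_apply,
      ContinuousLinearEquiv.coe_coe, hR]
    rw [this, Qe.symm_apply_apply]
  have hRinv : Ring.inverse QB = R := Ring.inverse_unit (Units.mk QB R h1 h2)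
  have hQBR : ∀ y : E, QB (R y) = y := fun y => by
    have := congrFun (congrArg (fun f : E →L[ℝ] E => (f : E → E)) h1) y
    simpa [ContinuousLinearMap.mul_apply] using this
  have hRQB : ∀ y : E, R (QB y) = y := fun y => by
    have := congrFun (congrArg (fun f : E →L[ℝ] E => (f : E → E)) h2) y
    simpa [ContinuousLinearMap.mul_apply] using this
  have hRnorm : ‖R‖ ≤ (Real.sqrt ε)⁻¹ := by
    refine R.opNorm_le_bound (by positivity) (fun y => ?_)
    have h3 := hlow (R y)
    rw [hQBR y] at h3
    rw [inv_mul_eq_div, le_div_iff₀ hsε, mul_comm]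
    exact h3
  have hRsym : ∀ x y : E, ⟪R x, y⟫ = ⟪x, R y⟫ := by
    intro x y
    calc ⟪R x, y⟫ = ⟪R x, QB (R y)⟫ := by rw [hQBR y]
      _ = ⟪QB (R x), R y⟫ := (hsym (R x) (R y)).symm
      _ = ⟪x, R y⟫ := by rw [hQBR x]
  have hRpos : R.IsPositive := by
    constructor
    · exact fun x y => hRsym x y
    · intro x
      have : (0:ℝ) ≤ ⟪R x, QB (R x)⟫ := by
        have := hQBnn (R x); exact this
      rw [hQBR x] at this
      simpa [ContinuousLinearMap.reApplyInnerSelf] using this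
  have hRub : ∀ u : E, ⟪u, R u⟫ ≤ (Real.sqrt ε)⁻¹ * ‖u‖ ^ 2 := by
    intro u
    have h3 : ⟪u, R u⟫ ≤ ‖u‖ * ‖R u‖ := real_inner_le_norm u (R u)
    have h4 : ‖R u‖ ≤ (Real.sqrt ε)⁻¹ * ‖u‖ := R.le_opNorm u |>.trans (by
      have := norm_nonneg u
      nlinarith [hRnorm])
    nlinarith [norm_nonneg u, norm_nonneg (R u)]
  have hRlow : ∀ y : E, ‖R y‖ ^ 2 ≤ (Real.sqrt ε)⁻¹ * ⟪y, R y⟫ := by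
    intro y
    by_cases hRy : R y = 0
    · rw [hRy]; simp
    · have hcs := stmt9_cs R hRpos y (R y)
      have he1 : ⟪y, R (R y)⟫ = ‖R y‖ ^ 2 := by
        rw [← hRsym y (R y), real_inner_self_eq_norm_sq]
      have he2 : ⟪R y, R (R y)⟫ ≤ (Real.sqrt ε)⁻¹ * ‖R y‖ ^ 2 := hRub (R y)
      have hRyn : 0 < ‖R y‖ := norm_pos_iff.mpr hRy
      have h5 : (0:ℝ) ≤ ⟪y, R y⟫ := by
        simpa [real_inner_comm] using hRpos.inner_nonneg_left y
      rw [he1] at hcs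
      nlinarith [hcs, mul_le_mul_of_nonneg_left he2 h5, pow_pos hRyn 2]
  have hform : ∀ x : E, Real.sqrt ε * ‖x‖ ^ 2 ≤ ⟪x, QB x⟫ := by
    intro x
    have h6 := hRlow (QB x)
    rw [hRQB x] at h6
    have h7 : ⟪QB x, x⟫ = ⟪x, QB x⟫ := real_inner_comm _ _
    rw [h7] at h6
    calc Real.sqrt ε * ‖x‖ ^ 2 ≤ Real.sqrt ε * ((Real.sqrt ε)⁻¹ * ⟪x, QB x⟫) := by
          nlinarith [h6, hsε]
      _ = ⟪x, QB x⟫ := by field_simp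
  refine ⟨R, h1, h2, hRinv, hRnorm, hRpos, hform, fun u => ?_⟩
  have := hsq' u
  nlinarith [hsq' u, sq_nonneg ‖u‖]


lemma stmt9_op_le_hs {ι : Type*} (e : HilbertBasis ι ℝ E) (T : E →L[ℝ] E)
    (h : Summable fun i => ‖T (e i)‖ ^ 2) :
    ‖T‖ ≤ Real.sqrt (∑' i, ‖T (e i)‖ ^ 2) := by
  set S := Real.sqrt (∑' i, ‖T (e i)‖ ^ 2) with hS
  refine T.opNorm_le_bound (Real.sqrt_nonneg _) (fun x => ?_)
  set a : ι → ℝ := fun i => ⟪e i, x⟫ with ha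
  have ha2 : HasSum (fun i => a i ^ 2) (‖x‖ ^ 2) := by
    have := e.hasSum_inner_mul_inner x x
    rw [real_inner_self_eq_norm_sq] at this
    have hfun : (fun i => a i ^ 2) = fun i => ⟪x, e i⟫ * ⟪e i, x⟫ := by
      funext i
      show ⟪e i, x⟫ ^ 2 = _
      rw [sq, real_inner_comm (e i) x]
    rw [hfun]; exact this
  have hx_sum : HasSum (fun i => a i • e i) x := by
    have := e.hasSum_repr x
    convert this using 2 with i
    rw [ha, e.repr_apply_apply]
  have hTx : HasSum (fun i => a i • T (e i)) (T x) := by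
    have := hx_sum.mapL T
    simpa [map_smul] using this
  have hg : Summable fun i => ‖a i • T (e i)‖ := by
    refine Summable.of_nonneg_of_le (fun i => norm_nonneg _)
      (fun i => ?_) (((ha2.summable.add h).div_const 2))
    rw [norm_smul, Real.norm_eq_abs]
    nlinarith [sq_nonneg (|a i| - ‖T (e i)‖), sq_abs (a i), abs_nonneg (a i),
      norm_nonneg (T (e i))]
  have h1 : ‖T x‖ ≤ ∑' i, ‖a i • T (e i)‖ := by
    rw [← hTx.tsum_eq]
    exact norm_tsum_le_tsum_norm hg
  have h2 : ∑' i, ‖a i • T (e i)‖ ≤ ‖x‖ * S := by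
    refine Summable.tsum_le_of_sum_le hg (fun s => ?_)
    have hcs : ∑ i ∈ s, ‖a i • T (e i)‖ ≤
        Real.sqrt (∑ i ∈ s, a i ^ 2) * Real.sqrt (∑ i ∈ s, ‖T (e i)‖ ^ 2) := by
      have := Real.sum_mul_le_sqrt_mul_sqrt s (fun i => |a i|) (fun i => ‖T (e i)‖)
      simpa [norm_smul, Real.norm_eq_abs, sq_abs] using this
    refine hcs.trans ?_
    have hle1 : Real.sqrt (∑ i ∈ s, a i ^ 2) ≤ ‖x‖ := by
      rw [← Real.sqrt_sq (norm_nonneg x)]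
      refine Real.sqrt_le_sqrt ?_
      rw [← ha2.tsum_eq]
      exact Summable.sum_le_tsum s (fun i _ => sq_nonneg _) ha2.summable
    have hle2 : Real.sqrt (∑ i ∈ s, ‖T (e i)‖ ^ 2) ≤ S := by
      refine Real.sqrt_le_sqrt ?_
      exact Summable.sum_le_tsum s (fun i _ => sq_nonneg _) h
    have := Real.sqrt_nonneg (∑ i ∈ s, a i ^ 2)
    have := Real.sqrt_nonneg (∑ i ∈ s, ‖T (e i)‖ ^ 2)
    nlinarith [norm_nonneg x, Real.sqrt_nonneg (∑' i, ‖T (e i)‖ ^ 2)]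
  linarith [h1, h2]

set_option maxHeartbeats 1000000 in
lemma stmt9_sylvester (ε : ℝ) (hε : 0 < ε) (Q Qhat D Δ : E →L[ℝ] E)
    (hQsym : ∀ x y : E, ⟪Q x, y⟫ = ⟪x, Q y⟫)
    (hQhatsym : ∀ x y : E, ⟪Qhat x, y⟫ = ⟪x, Qhat y⟫)
    (hQform : ∀ x : E, Real.sqrt ε * ‖x‖ ^ 2 ≤ ⟪x, Q x⟫)
    (hQhatform : ∀ x : E, Real.sqrt ε * ‖x‖ ^ 2 ≤ ⟪x, Qhat x⟫)
    (hD : IsSelfAdjoint D)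
    (heq : Qhat * D + D * Q = Δ) :
    2 * Real.sqrt ε * ‖D‖ ≤ ‖Δ‖ := by
  have hsε : 0 < Real.sqrt ε := Real.sqrt_pos.mpr hε
  refine le_of_forall_pos_le_add (fun η hη => ?_)
  rcases eq_or_lt_of_le (norm_nonneg D) with hD0 | hDpos
  · rw [← hD0]
    have := norm_nonneg Δ
    nlinarith
  obtain ⟨C, hC⟩ : ∃ C : ℝ, C = ‖Q‖ + ‖Qhat‖ + 1 := ⟨_, rfl⟩
  have hCpos : 0 < C := by rw [hC]; positivity
  have hCge : ‖Q‖ + ‖Qhat‖ ≤ C := by rw [hC]; linarith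
  obtain ⟨δ, hδpos, hδ1, hδ2, hδ3⟩ :
      ∃ δ : ℝ, 0 < δ ∧ δ ≤ ‖D‖ / 2 ∧ 2 * Real.sqrt ε * δ ≤ η / 2 ∧
        2 * δ * ‖D‖ ≤ (η / (2 * C)) ^ 2 := by
    refine ⟨min (‖D‖ / 2) (min (η / (4 * Real.sqrt ε)) (η ^ 2 / (8 * ‖D‖ * C ^ 2))),
      lt_min (by positivity) (lt_min (by positivity) (by positivity)), min_le_left _ _, ?_, ?_⟩
    · have h2 : min (‖D‖ / 2) (min (η / (4 * Real.sqrt ε)) (η ^ 2 / (8 * ‖D‖ * C ^ 2)))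
          ≤ η / (4 * Real.sqrt ε) := (min_le_right _ _).trans (min_le_left _ _)
      rw [le_div_iff₀ (by positivity : (0:ℝ) < 4 * Real.sqrt ε)] at h2
      rw [le_div_iff₀ (by positivity : (0:ℝ) < 2)]
      nlinarith [h2]
    · have h3 : min (‖D‖ / 2) (min (η / (4 * Real.sqrt ε)) (η ^ 2 / (8 * ‖D‖ * C ^ 2)))
          ≤ η ^ 2 / (8 * ‖D‖ * C ^ 2) := (min_le_right _ _).trans (min_le_right _ _)
      rw [le_div_iff₀ (by positivity : (0:ℝ) < 8 * ‖D‖ * C ^ 2)] at h3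
      have hexp : (η / (2 * C)) ^ 2 = η ^ 2 / (4 * C ^ 2) := by
        field_simp
        ring
      rw [hexp, le_div_iff₀ (by positivity : (0:ℝ) < 4 * C ^ 2)]
      nlinarith [h3]
  have hM : 0 ≤ ‖D‖ - δ := by linarith
  -- find an approximate eigenvector
  have hx : ∃ x : E, (‖D‖ - δ) * ‖x‖ ^ 2 < |⟪x, D x⟫| := by
    by_contra hc
    push_neg at hc
    have := stmt9_sa_norm_le D hD hM hc
    linarith
  obtain ⟨x, hxgt⟩ := hx
  have hx0 : x ≠ 0 := by
    rintro rfl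
    simp at hxgt
  have hxn : 0 < ‖x‖ := norm_pos_iff.mpr hx0
  obtain ⟨u, hu⟩ : ∃ u : E, u = ‖x‖⁻¹ • x := ⟨_, rfl⟩
  have hun : ‖u‖ = 1 := by
    rw [hu, norm_smul, Real.norm_eq_abs, abs_of_nonneg (by positivity)]
    field_simp
  obtain ⟨lam, hlam⟩ : ∃ l : ℝ, l = ⟪u, D u⟫ := ⟨_, rfl⟩
  have hlam_eq : lam = ‖x‖⁻¹ * (‖x‖⁻¹ * ⟪x, D x⟫) := by
    rw [hlam, hu, map_smul, real_inner_smul_left, real_inner_smul_right]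
  have hlam_gt : ‖D‖ - δ < |lam| := by
    have h6 : ⟪x, D x⟫ = lam * ‖x‖ ^ 2 := by
      rw [hlam_eq]
      field_simp
    have h5 : |⟪x, D x⟫| = |lam| * ‖x‖ ^ 2 := by
      rw [h6, abs_mul, abs_of_nonneg (by positivity : (0:ℝ) ≤ ‖x‖ ^ 2)]
    nlinarith [hxgt, h5, pow_pos hxn 2]
  have hlam_le : |lam| ≤ ‖D‖ := by
    have h1 : |⟪u, D u⟫| ≤ ‖u‖ * ‖D u‖ := abs_real_inner_le_norm u (D u)
    have h2 : ‖D u‖ ≤ ‖D‖ * ‖u‖ := D.le_opNorm u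
    rw [hun] at h1 h2
    rw [hlam]
    simpa using h1.trans (by simpa using h2)
  obtain ⟨w, hw⟩ : ∃ w : E, w = D u - lam • u := ⟨_, rfl⟩
  have hDu : D u = lam • u + w := by rw [hw]; abel
  have hw2 : ‖w‖ ^ 2 ≤ ‖D‖ ^ 2 - lam ^ 2 := by
    have hDuu : ⟪D u, u⟫ = lam := by rw [real_inner_comm, ← hlam]
    have hexp : ‖w‖ ^ 2 = ‖D u‖ ^ 2 - lam ^ 2 := by
      rw [hw, norm_sub_sq_real, real_inner_smul_right, norm_smul, Real.norm_eq_abs, hDuu, hun,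
        mul_one, sq_abs]
      ring
    have hDun : ‖D u‖ ≤ ‖D‖ := by simpa [hun] using D.le_opNorm u
    have : ‖D u‖ ^ 2 ≤ ‖D‖ ^ 2 := by nlinarith [norm_nonneg (D u)]
    linarith [hexp]
  have hwb : ‖w‖ ^ 2 ≤ (η / (2 * C)) ^ 2 := by
    have h1 : (‖D‖ - δ) ^ 2 ≤ lam ^ 2 := by
      have := pow_le_pow_left₀ hM hlam_gt.le 2
      rwa [sq_abs] at this
    nlinarith [hw2, h1, hδ3]
  have hwle : ‖w‖ ≤ η / (2 * C) := by
    have := Real.sqrt_le_sqrt hwb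
    rwa [Real.sqrt_sq (norm_nonneg _), Real.sqrt_sq (by positivity)] at this
  -- key identity
  have hkey : ⟪u, Δ u⟫ = lam * (⟪Qhat u, u⟫ + ⟪u, Q u⟫) + (⟪Qhat u, w⟫ + ⟪w, Q u⟫) := by
    have h1 : ⟪u, Δ u⟫ = ⟪u, Qhat (D u)⟫ + ⟪u, D (Q u)⟫ := by
      rw [← heq]
      simp [inner_add_right, ContinuousLinearMap.add_apply, ContinuousLinearMap.mul_apply]
    have h2 : ⟪u, Qhat (D u)⟫ = lam * ⟪Qhat u, u⟫ + ⟪Qhat u, w⟫ := by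
      rw [← hQhatsym u (D u), hDu, inner_add_right, real_inner_smul_right]
    have h3 : ⟪u, D (Q u)⟫ = lam * ⟪u, Q u⟫ + ⟪w, Q u⟫ := by
      have hDsym : ∀ a b : E, ⟪D a, b⟫ = ⟪a, D b⟫ := fun a b => hD.isSymmetric a b
      rw [← hDsym u (Q u), hDu, inner_add_left, real_inner_smul_left]
    rw [h1, h2, h3]
    ring
  have hΔb : |⟪u, Δ u⟫| ≤ ‖Δ‖ := by
    have h1 : |⟪u, Δ u⟫| ≤ ‖u‖ * ‖Δ u‖ := abs_real_inner_le_norm u (Δ u)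
    have h2 : ‖Δ u‖ ≤ ‖Δ‖ * ‖u‖ := Δ.le_opNorm u
    rw [hun] at h1 h2
    simpa using h1.trans (by simpa using h2)
  have hQhatw : |⟪Qhat u, w⟫| ≤ ‖Qhat‖ * ‖w‖ := by
    have h1 : |⟪Qhat u, w⟫| ≤ ‖Qhat u‖ * ‖w‖ := abs_real_inner_le_norm _ _
    have h2 : ‖Qhat u‖ ≤ ‖Qhat‖ := by simpa [hun] using Qhat.le_opNorm u
    nlinarith [norm_nonneg w]
  have hQw : |⟪w, Q u⟫| ≤ ‖Q‖ * ‖w‖ := by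
    have h1 : |⟪w, Q u⟫| ≤ ‖w‖ * ‖Q u‖ := abs_real_inner_le_norm _ _
    have h2 : ‖Q u‖ ≤ ‖Q‖ := by simpa [hun] using Q.le_opNorm u
    nlinarith [norm_nonneg w]
  have hQfu : Real.sqrt ε ≤ ⟪u, Q u⟫ := by simpa [hun] using hQform u
  have hQhatfu : Real.sqrt ε ≤ ⟪Qhat u, u⟫ := by
    rw [real_inner_comm]
    simpa [hun] using hQhatform u
  -- assemble
  have hmain : |lam| * (2 * Real.sqrt ε) ≤ ‖Δ‖ + (‖Q‖ + ‖Qhat‖) * ‖w‖ := by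
    have h1 : |lam * (⟪Qhat u, u⟫ + ⟪u, Q u⟫)| ≤ |⟪u, Δ u⟫| + (|⟪Qhat u, w⟫| + |⟪w, Q u⟫|) := by
      have heq2 : lam * (⟪Qhat u, u⟫ + ⟪u, Q u⟫) = ⟪u, Δ u⟫ - (⟪Qhat u, w⟫ + ⟪w, Q u⟫) := by
        rw [hkey]; ring
      rw [heq2]
      calc |⟪u, Δ u⟫ - (⟪Qhat u, w⟫ + ⟪w, Q u⟫)|
          ≤ |⟪u, Δ u⟫| + |⟪Qhat u, w⟫ + ⟪w, Q u⟫| := abs_sub _ _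
        _ ≤ _ := by
            have := abs_add_le ⟪Qhat u, w⟫ ⟪w, Q u⟫
            linarith
    have h2 : |lam| * (2 * Real.sqrt ε) ≤ |lam * (⟪Qhat u, u⟫ + ⟪u, Q u⟫)| := by
      rw [abs_mul]
      have h3 : 2 * Real.sqrt ε ≤ ⟪Qhat u, u⟫ + ⟪u, Q u⟫ := by linarith
      have h4 : |⟪Qhat u, u⟫ + ⟪u, Q u⟫| = ⟪Qhat u, u⟫ + ⟪u, Q u⟫ :=
        abs_of_nonneg (by linarith)
      rw [h4]
      exact mul_le_mul_of_nonneg_left h3 (abs_nonneg _)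
    linarith [h1, h2, hΔb, hQhatw, hQw]
  have hfinal1 : (‖Q‖ + ‖Qhat‖) * ‖w‖ ≤ η / 2 := by
    have h1 : (‖Q‖ + ‖Qhat‖) * ‖w‖ ≤ C * (η / (2 * C)) := by
      have hQn : 0 ≤ ‖Q‖ + ‖Qhat‖ := by positivity
      have := norm_nonneg w
      nlinarith [hwle, hCpos, hCge]
    have h2 : C * (η / (2 * C)) = η / 2 := by
      field_simp
    linarith
  have hstep : 2 * Real.sqrt ε * ‖D‖ ≤ |lam| * (2 * Real.sqrt ε) + 2 * Real.sqrt ε * δ := by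
    nlinarith [hlam_gt, hsε]
  linarith [hmain, hfinal1, hδ2, hstep]

end Stmt9Aux


set_option maxHeartbeats 1000000 in
set_option synthInstance.maxHeartbeats 200000 in
/-- Let `A`, `Â` be bounded positive operators on a real Hilbert space with `Â − A`
Hilbert–Schmidt and `ε > 0`.  Here `A^{1/2}` is the (unique) positive square root of `A`,
`(εI + A)^{1/2}`, `(εI + Â)^{1/2}` those of `εI + A`, `εI + Â`, and `(εI + A)^{−1/2}`,
`(εI + Â)^{−1/2}` their (ring) inverses.  Then
(i) `‖(εI + Â)^{−1/2} − (εI + A)^{−1/2}‖ ≤ ‖Â − A‖₂ / ε^{3/2}`, and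
(ii) `‖[(εI + Â)^{−1/2} − (εI + A)^{−1/2}] A^{1/2}‖ ≤ ‖Â − A‖₂ / ε`,
where `‖·‖` is the operator norm and `‖·‖₂` the Hilbert–Schmidt norm, computed via a
Hilbert basis `(eᵢ)`. -/
theorem stmt_9 {E : Type*} [NormedAddCommGroup E] [InnerProductSpace ℝ E] [CompleteSpace E]
    {ι : Type*} (e : HilbertBasis ι ℝ E)
    (A Ahat : E →L[ℝ] E) (hA : 0 ≤ A) (hAhat : 0 ≤ Ahat)
    (hHS : Summable fun i => ‖(Ahat - A) (e i)‖ ^ 2)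
    (ε : ℝ) (hε : 0 < ε)
    -- `A^{1/2}`: the unique positive square root of `A`
    (sqrtA : E →L[ℝ] E) (hsqrtA_pos : 0 ≤ sqrtA) (hsqrtA : sqrtA * sqrtA = A)
    -- `(εI + A)^{1/2}`: the unique positive square root of `εI + A`
    (Q : E →L[ℝ] E) (hQ_pos : 0 ≤ Q) (hQ : Q * Q = ε • (1 : E →L[ℝ] E) + A)
    -- `(εI + Â)^{1/2}`: the unique positive square root of `εI + Â`
    (Qhat : E →L[ℝ] E) (hQhat_pos : 0 ≤ Qhat)
    (hQhat : Qhat * Qhat = ε • (1 : E →L[ℝ] E) + Ahat) :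
    ‖Ring.inverse Qhat - Ring.inverse Q‖ ≤
      Real.sqrt (∑' i, ‖(Ahat - A) (e i)‖ ^ 2) / ε ^ ((3 : ℝ) / 2) ∧
    ‖(Ring.inverse Qhat - Ring.inverse Q) * sqrtA‖ ≤
      Real.sqrt (∑' i, ‖(Ahat - A) (e i)‖ ^ 2) / ε := by
  obtain ⟨s, hs_def⟩ : ∃ s : ℝ, s = Real.sqrt ε := ⟨_, rfl⟩
  have hspos : 0 < s := hs_def ▸ Real.sqrt_pos.mpr hε
  have hs_sq : s * s = ε := by rw [hs_def]; exact Real.mul_self_sqrt hε.le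
  obtain ⟨hs, hhs_def⟩ : ∃ hs : ℝ, hs = Real.sqrt (∑' i, ‖(Ahat - A) (e i)‖ ^ 2) := ⟨_, rfl⟩
  have hhs0 : 0 ≤ hs := hhs_def ▸ Real.sqrt_nonneg _
  have hΔhs : ‖Ahat - A‖ ≤ hs := hhs_def ▸ stmt9_op_le_hs e (Ahat - A) hHS
  -- inverse square root bundles
  obtain ⟨R, hQR, hRQ, hRinv, hRn, hRpos, hQform, hQA⟩ := stmt9_inv ε hε A Q hA hQ_pos hQ
  obtain ⟨Rh, hQRh, hRhQ, hRhinv, hRhn, hRhpos, hQhform, _⟩ :=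
    stmt9_inv ε hε Ahat Qhat hAhat hQhat_pos hQhat
  rw [← hs_def] at hRn hRhn
  -- symmetry facts
  rw [ContinuousLinearMap.nonneg_iff_isPositive] at hQ_pos hQhat_pos hsqrtA_pos
  have hQsym : ∀ x y : E, ⟪Q x, y⟫ = ⟪x, Q y⟫ :=
    fun x y => hQ_pos.isSelfAdjoint.isSymmetric x y
  have hQhsym : ∀ x y : E, ⟪Qhat x, y⟫ = ⟪x, Qhat y⟫ :=
    fun x y => hQhat_pos.isSelfAdjoint.isSymmetric x y
  have hsAsym : ∀ x y : E, ⟪sqrtA x, y⟫ = ⟪x, sqrtA y⟫ :=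
    fun x y => hsqrtA_pos.isSelfAdjoint.isSymmetric x y
  -- the Sylvester bound on D = Qhat - Q
  have hD_sa : IsSelfAdjoint (Qhat - Q) :=
    hQhat_pos.isSelfAdjoint.sub hQ_pos.isSelfAdjoint
  have heqD : Qhat * (Qhat - Q) + (Qhat - Q) * Q = Ahat - A := by
    have h1 : Qhat * (Qhat - Q) + (Qhat - Q) * Q = Qhat * Qhat - Q * Q := by noncomm_ring
    rw [h1, hQhat, hQ]
    abel
  have hDb : 2 * s * ‖Qhat - Q‖ ≤ ‖Ahat - A‖ := by
    rw [hs_def]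
    exact stmt9_sylvester ε hε Q Qhat (Qhat - Q) (Ahat - A) hQsym hQhsym hQform hQhform
      hD_sa heqD
  have hDn : ‖Qhat - Q‖ ≤ hs / (2 * s) := by
    rw [le_div_iff₀ (by positivity)]
    nlinarith [hDb, hΔhs]
  -- the basic identity
  have hid : Ring.inverse Qhat - Ring.inverse Q = Rh * ((Q - Qhat) * R) := by
    rw [hRinv, hRhinv]
    have h1 : Rh * ((Q - Qhat) * R) = Rh * (Q * R) - (Rh * Qhat) * R := by noncomm_ring
    rw [h1, hQR, hRhQ, mul_one, one_mul]
  have hQQh : ‖Q - Qhat‖ = ‖Qhat - Q‖ := norm_sub_rev _ _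
  constructor
  · -- part (i)
    rw [hid, ← hhs_def]
    have h32 : ε ^ ((3 : ℝ) / 2) = ε * s := by
      rw [show (3 : ℝ) / 2 = 1 + 1 / 2 by norm_num, Real.rpow_add hε, Real.rpow_one,
        ← Real.sqrt_eq_rpow, hs_def]
    calc ‖Rh * ((Q - Qhat) * R)‖ ≤ ‖Rh‖ * ‖(Q - Qhat) * R‖ := norm_mul_le _ _
      _ ≤ ‖Rh‖ * (‖Q - Qhat‖ * ‖R‖) := by
          exact mul_le_mul_of_nonneg_left (norm_mul_le _ _) (norm_nonneg _)
      _ ≤ s⁻¹ * (hs / (2 * s) * s⁻¹) := by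
          rw [hQQh]
          have h0 : 0 ≤ ‖Qhat - Q‖ := norm_nonneg _
          have h0' : 0 ≤ ‖R‖ := norm_nonneg _
          have h0'' : 0 ≤ ‖Rh‖ := norm_nonneg _
          have hb : ‖Qhat - Q‖ * ‖R‖ ≤ hs / (2 * s) * s⁻¹ := by
            apply mul_le_mul hDn hRn h0' (by positivity)
          apply mul_le_mul hRhn hb (by positivity) (by positivity)
      _ ≤ hs / ε ^ ((3 : ℝ) / 2) := by
          rw [h32, ← hs_sq]
          have heq3 : s⁻¹ * (hs / (2 * s) * s⁻¹) = hs / (2 * (s * s * s)) := by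
            simp only [div_eq_mul_inv, mul_inv]
            ring
          rw [heq3, div_le_div_iff₀ (by positivity) (by positivity)]
          nlinarith [hhs0, mul_pos (mul_pos hspos hspos) hspos]
  · -- part (ii)
    rw [hid, ← hhs_def]
    have hid2 : Rh * ((Q - Qhat) * R) * sqrtA = Rh * ((Q - Qhat) * (R * sqrtA)) := by
      noncomm_ring
    rw [hid2]
    -- ‖R * sqrtA‖ ≤ 1
    have hsAR : ‖sqrtA * R‖ ≤ 1 := by
      refine ContinuousLinearMap.opNorm_le_bound _ zero_le_one (fun y => ?_)
      rw [one_mul, ContinuousLinearMap.mul_apply]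
      have h1 : ‖sqrtA (R y)‖ ^ 2 = ⟪R y, A (R y)⟫ := by
        rw [← real_inner_self_eq_norm_sq, hsAsym (R y) (sqrtA (R y)),
          real_inner_comm]
        have : sqrtA (sqrtA (R y)) = A (R y) := by
          rw [← ContinuousLinearMap.mul_apply, hsqrtA]
        rw [← this]
        exact real_inner_comm _ _
      have h2 : ⟪R y, A (R y)⟫ ≤ ‖Q (R y)‖ ^ 2 := hQA (R y)
      have h3 : Q (R y) = y := by
        have := congrFun (congrArg (fun f : E →L[ℝ] E => (f : E → E)) hQR) y
        simpa [ContinuousLinearMap.mul_apply] using this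
      rw [h3] at h2
      nlinarith [h1, h2, norm_nonneg (sqrtA (R y)), norm_nonneg y]
    have hRsA : ‖R * sqrtA‖ ≤ 1 := by
      have hstar : R * sqrtA = star (sqrtA * R) := by
        rw [star_mul, hRpos.isSelfAdjoint.star_eq, hsqrtA_pos.isSelfAdjoint.star_eq]
      rw [hstar]
      exact (norm_star _).trans_le hsAR
    calc ‖Rh * ((Q - Qhat) * (R * sqrtA))‖
        ≤ ‖Rh‖ * ‖(Q - Qhat) * (R * sqrtA)‖ := norm_mul_le _ _
      _ ≤ ‖Rh‖ * (‖Q - Qhat‖ * ‖R * sqrtA‖) :=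
          mul_le_mul_of_nonneg_left (norm_mul_le _ _) (norm_nonneg _)
      _ ≤ s⁻¹ * (hs / (2 * s) * 1) := by
          rw [hQQh]
          have hb : ‖Qhat - Q‖ * ‖R * sqrtA‖ ≤ hs / (2 * s) * 1 :=
            mul_le_mul hDn hRsA (norm_nonneg _) (by positivity)
          exact mul_le_mul hRhn hb (by positivity) (by positivity)
      _ ≤ hs / ε := by
          rw [← hs_sq, mul_one]
          have heq4 : s⁻¹ * (hs / (2 * s)) = hs / (2 * (s * s)) := by
            simp only [div_eq_mul_inv, mul_inv]
            ring
          rw [heq4, div_le_div_iff₀ (by positivity) (by positivity)]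
          nlinarith [hhs0, mul_pos hspos hspos]
end

section
/- Let ε > 0, M > 0, β > 0 and 0 ≤ λ ≤ M. Then the quantity q(λ) := ε λ^β / ( √(ε+λ) · ( √λ + √(ε+λ) ) ) satisfies: q(λ) ≤ ε^β whenever 0 < β ≤ 1, and q(λ) ≤ ε M^{β−1} whenever β ≥ 1. Consequently, for λ > 0, |1/√(ε+λ) − 1/√λ| · λ^{1/2+β} ≤ ε^β for 0 < β ≤ 1 and ≤ ε M^{β−1} for β ≥ 1. -/
/-- Let `ε > 0`, `M > 0`, `β > 0` and `0 ≤ λ ≤ M`.  Then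
`q(λ) := ε λ^β / ( √(ε+λ) ( √λ + √(ε+λ) ) )` satisfies `q(λ) ≤ ε^β` for `0 < β ≤ 1`
and `q(λ) ≤ ε M^{β−1}` for `β ≥ 1`; consequently, for `λ > 0`,
`|1/√(ε+λ) − 1/√λ| λ^{1/2+β}` obeys the same bounds. -/
theorem stmt_13 (ε M β lam : ℝ) (hε : 0 < ε) (hM : 0 < M) (hβ : 0 < β)
    (hlam0 : 0 ≤ lam) (hlamM : lam ≤ M) :
    ((β ≤ 1 →
        ε * lam ^ β / (Real.sqrt (ε + lam) * (Real.sqrt lam + Real.sqrt (ε + lam)))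
          ≤ ε ^ β) ∧
     (1 ≤ β →
        ε * lam ^ β / (Real.sqrt (ε + lam) * (Real.sqrt lam + Real.sqrt (ε + lam)))
          ≤ ε * M ^ (β - 1))) ∧
    (0 < lam →
      (β ≤ 1 →
        |1 / Real.sqrt (ε + lam) - 1 / Real.sqrt lam| * lam ^ (1 / 2 + β) ≤ ε ^ β) ∧
      (1 ≤ β →
        |1 / Real.sqrt (ε + lam) - 1 / Real.sqrt lam| * lam ^ (1 / 2 + β)
          ≤ ε * M ^ (β - 1))) := by
  set s := Real.sqrt lam with hs
  set t := Real.sqrt (ε + lam) with ht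
  have hεlam : 0 < ε + lam := by linarith
  have ht0 : 0 < t := Real.sqrt_pos.mpr hεlam
  have hs0 : 0 ≤ s := Real.sqrt_nonneg _
  have hts : s ≤ t := Real.sqrt_le_sqrt (by linarith)
  have hD : 0 < t * (s + t) := by positivity
  have ht2 : t ^ 2 = ε + lam := Real.sq_sqrt hεlam.le
  have hs2 : s ^ 2 = lam := Real.sq_sqrt hlam0
  have main : (β ≤ 1 → ε * lam ^ β / (t * (s + t)) ≤ ε ^ β) ∧
      (1 ≤ β → ε * lam ^ β / (t * (s + t)) ≤ ε * M ^ (β - 1)) := by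
    constructor
    · intro hβ1
      rw [div_le_iff₀ hD]
      have h1 : lam ^ β ≤ (ε + lam) ^ β := Real.rpow_le_rpow hlam0 (by linarith) hβ.le
      have h2 : (ε + lam) ^ (β - 1) ≤ ε ^ (β - 1) :=
        Real.rpow_le_rpow_of_nonpos hε (by linarith) (by linarith)
      have h3 : (ε + lam) ^ β = (ε + lam) ^ (β - 1) * (ε + lam) := by
        rw [← Real.rpow_add_one hεlam.ne' (β - 1)]; ring_nf
      have h4 : ε ^ β = ε * ε ^ (β - 1) := by
        nth_rewrite 1 [show β = β - 1 + 1 by ring]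
        rw [Real.rpow_add_one hε.ne']; ring
      have h5 : ε + lam ≤ t * (s + t) := by nlinarith
      have hnn : (0:ℝ) ≤ ε ^ (β - 1) := Real.rpow_nonneg hε.le _
      calc ε * lam ^ β ≤ ε * ((ε + lam) ^ (β - 1) * (ε + lam)) := by
            rw [← h3]; exact mul_le_mul_of_nonneg_left h1 hε.le
        _ ≤ ε * (ε ^ (β - 1) * (ε + lam)) := by
            have := mul_le_mul_of_nonneg_right h2 hεlam.le
            exact mul_le_mul_of_nonneg_left this hε.le
        _ = ε ^ β * (ε + lam) := by rw [h4]; ring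
        _ ≤ ε ^ β * (t * (s + t)) :=
            mul_le_mul_of_nonneg_left h5 (Real.rpow_nonneg hε.le β)
    · intro hβ1
      rw [div_le_iff₀ hD]
      rcases hlam0.eq_or_lt with h0 | hlam
      · rw [← h0, Real.zero_rpow hβ.ne']
        have : 0 ≤ ε * M ^ (β - 1) * (t * (s + t)) := by positivity
        linarith
      · have h1 : lam ^ β = lam ^ (β - 1) * lam := by
          rw [← Real.rpow_add_one hlam.ne' (β - 1)]; ring_nf
        have h2 : lam ^ (β - 1) ≤ M ^ (β - 1) :=
          Real.rpow_le_rpow hlam0 hlamM (by linarith)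
        have h5 : lam ≤ t * (s + t) := by nlinarith
        calc ε * lam ^ β = ε * (lam ^ (β - 1) * lam) := by rw [h1]
          _ ≤ ε * (M ^ (β - 1) * (t * (s + t))) := by
              refine mul_le_mul_of_nonneg_left ?_ hε.le
              exact mul_le_mul h2 h5 hlam.le (by positivity)
          _ = ε * M ^ (β - 1) * (t * (s + t)) := by ring
  refine ⟨main, ?_⟩
  intro hlam
  have hspos : 0 < s := Real.sqrt_pos.mpr hlam
  have key : |1 / t - 1 / s| * lam ^ (1 / 2 + β) = ε * lam ^ β / (t * (s + t)) := by
    have h1 : lam ^ ((1:ℝ) / 2 + β) = s * lam ^ β := by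
      rw [Real.rpow_add hlam, hs, Real.sqrt_eq_rpow]
    have habs : |1 / t - 1 / s| = 1 / s - 1 / t := by
      rw [abs_of_nonpos (by
        have := one_div_le_one_div_of_le hspos hts
        linarith)]
      ring
    rw [habs, h1]
    have hεeq : t ^ 2 - s ^ 2 = ε := by rw [ht2, hs2]; ring
    field_simp
    linear_combination hεeq
  rw [key]
  exact main
end

section
/- There exists a universal constant c > 0 with the following property. Let H be a separable real Hilbert space, and let Y₁, …, Yₙ be i.i.d. random elements of H with Bochner mean zero and K := ‖ ‖Y₁‖ ‖_{ψ₁} < ∞. Then for every t with 0 ≤ t ≤ K: P( ‖ (1/n) ∑_{k=1}^n Y_k ‖ ≥ t ) ≤ 2 exp( − c n t² / K² ). -/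
open MeasureTheory ProbabilityTheory

/-- `E[exp(|Z|/t)]`, as an extended nonnegative real. -/
noncomputable def expMoment1 {Ω : Type*} [MeasurableSpace Ω] (P : Measure Ω)
    (Z : Ω → ℝ) (t : ℝ) : ENNReal :=
  ∫⁻ ω, ENNReal.ofReal (Real.exp (|Z ω| / t)) ∂P

/-- The admissible set in the definition of the sub-exponential norm
`‖Z‖_{ψ₁} = inf { t > 0 : E[exp(|Z|/t)] ≤ 2 }`. -/
def psi1Set {Ω : Type*} [MeasurableSpace Ω] (P : Measure Ω) (Z : Ω → ℝ) : Set ℝ :=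
  {t : ℝ | 0 < t ∧ expMoment1 P Z t ≤ 2}

/-- The sub-exponential norm `‖Z‖_{ψ₁} := inf { t > 0 : E[exp(|Z|/t)] ≤ 2 }`;
it is finite precisely when `psi1Set P Z` is nonempty. -/
noncomputable def psi1Norm {Ω : Type*} [MeasurableSpace Ω] (P : Measure Ω) (Z : Ω → ℝ) : ℝ :=
  sInf (psi1Set P Z)

open scoped ENNReal NNReal
open Real Set


private lemma sinh_le_mul_cosh {x : ℝ} (hx : 0 ≤ x) : Real.sinh x ≤ x * Real.cosh x := by
  have H : ∀ y : ℝ, HasDerivAt (fun z => z * Real.cosh z - Real.sinh z) (y * Real.sinh y) y := by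
    intro y
    have h := ((hasDerivAt_id y).mul (Real.hasDerivAt_cosh y)).sub (Real.hasDerivAt_sinh y)
    refine h.congr_deriv ?_; simp only [id_eq]; ring
  have hmono : MonotoneOn (fun z => z * Real.cosh z - Real.sinh z) (Set.Ici 0) := by
    apply monotoneOn_of_deriv_nonneg (convex_Ici 0)
    · exact ((continuous_id.mul Real.continuous_cosh).sub Real.continuous_sinh).continuousOn
    · exact fun y _ => (H y).differentiableAt.differentiableWithinAt
    · intro y hy
      rw [interior_Ici, Set.mem_Ioi] at hy
      rw [(H y).deriv]
      exact mul_nonneg hy.le (Real.sinh_nonneg_iff.2 hy.le)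
  have := hmono (Set.self_mem_Ici) (Set.mem_Ici.2 hx) hx
  simp at this
  linarith

private lemma mul_sinh_le {x y : ℝ} (hx : 0 ≤ x) (hxy : x ≤ y) :
    y * Real.sinh x ≤ x * Real.sinh y := by
  have H : ∀ z : ℝ, HasDerivAt (fun w => x * Real.sinh w - w * Real.sinh x)
      (x * Real.cosh z - Real.sinh x) z := by
    intro z
    have h := ((Real.hasDerivAt_sinh z).const_mul x).sub
      ((hasDerivAt_id z).mul_const (Real.sinh x))
    refine h.congr_deriv ?_; ring
  have hmono : MonotoneOn (fun w => x * Real.sinh w - w * Real.sinh x) (Set.Ici x) := by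
    apply monotoneOn_of_deriv_nonneg (convex_Ici x)
    · exact ((continuous_const.mul Real.continuous_sinh).sub
        (continuous_id.mul continuous_const)).continuousOn
    · exact fun z _ => (H z).differentiableAt.differentiableWithinAt
    · intro z hz
      rw [interior_Ici, Set.mem_Ioi] at hz
      rw [(H z).deriv]
      have h1 : Real.sinh x ≤ x * Real.cosh x := sinh_le_mul_cosh hx
      have h2 : Real.cosh x ≤ Real.cosh z := by
        rw [Real.cosh_le_cosh, abs_of_nonneg hx, abs_of_nonneg (hx.trans hz.le)]
        exact hz.le
      nlinarith
  have := hmono (Set.self_mem_Ici) (Set.mem_Ici.2 hxy) hxy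
  simp at this
  linarith

private lemma cosh_sqrt_le_aux {a b : ℝ} (hb : 0 ≤ b) (hba : b ≤ a) :
    Real.cosh (Real.sqrt (a ^ 2 + b ^ 2)) ≤ Real.cosh a * Real.cosh b := by
  have ha : 0 ≤ a := hb.trans hba
  rcases eq_or_lt_of_le ha with h0 | ha'
  · have hb0 : b = 0 := le_antisymm (hba.trans h0.symm.le) hb
    simp [← h0, hb0]
  -- a > 0 now
  have hpos : ∀ s : ℝ, (0:ℝ) < a ^ 2 + s ^ 2 := fun s => by positivity
  have H : ∀ s : ℝ, HasDerivAt (fun z => Real.cosh a * Real.cosh z -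
      Real.cosh (Real.sqrt (a ^ 2 + z ^ 2)))
      (Real.cosh a * Real.sinh s -
        Real.sinh (Real.sqrt (a ^ 2 + s ^ 2)) * (s / Real.sqrt (a ^ 2 + s ^ 2))) s := by
    intro s
    have h1 : HasDerivAt (fun z : ℝ => a ^ 2 + z ^ 2) (2 * s) s := by
      have := ((hasDerivAt_pow 2 s).const_add (a ^ 2))
      simpa using this
    have h2 := (Real.hasDerivAt_sqrt (hpos s).ne').comp s h1
    have h3 := (Real.hasDerivAt_cosh (Real.sqrt (a ^ 2 + s ^ 2))).comp s h2
    have h4 := ((Real.hasDerivAt_cosh s).const_mul (Real.cosh a)).sub h3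
    have hr : Real.sqrt (a ^ 2 + s ^ 2) ≠ 0 := (Real.sqrt_pos.2 (hpos s)).ne'
    refine h4.congr_deriv ?_
    field_simp
  have hmono : MonotoneOn (fun z => Real.cosh a * Real.cosh z -
      Real.cosh (Real.sqrt (a ^ 2 + z ^ 2))) (Set.Icc 0 a) := by
    apply monotoneOn_of_deriv_nonneg (convex_Icc 0 a)
    · exact Continuous.continuousOn (by
        exact (continuous_const.mul Real.continuous_cosh).sub
          (Real.continuous_cosh.comp ((continuous_const.add (continuous_pow 2)).sqrt)))
    · exact fun z _ => (H z).differentiableAt.differentiableWithinAt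
    · intro s hs
      rw [interior_Icc, Set.mem_Ioo] at hs
      obtain ⟨hs0, hsa⟩ := hs
      rw [(H s).deriv]
      set r := Real.sqrt (a ^ 2 + s ^ 2) with hr
      have hrpos : 0 < r := Real.sqrt_pos.2 (hpos s)
      have hsr : s ≤ r := by
        rw [hr]
        calc s = Real.sqrt (s ^ 2) := (Real.sqrt_sq hs0.le).symm
        _ ≤ _ := Real.sqrt_le_sqrt (by nlinarith)
      have hras : r ≤ a + s := by
        rw [hr]
        calc Real.sqrt (a ^ 2 + s ^ 2) ≤ Real.sqrt ((a + s) ^ 2) :=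
          Real.sqrt_le_sqrt (by nlinarith)
        _ = a + s := Real.sqrt_sq (by positivity)
      -- (a+s) * sinh r ≤ r * sinh (a+s)
      have key1 : (a + s) * Real.sinh r ≤ r * Real.sinh (a + s) :=
        mul_sinh_le hrpos.le hras
      -- (a+s) * sinh (a - s) ≤ (a - s) * sinh (a + s)
      have key2 : (a + s) * Real.sinh (a - s) ≤ (a - s) * Real.sinh (a + s) :=
        mul_sinh_le (by linarith) (by linarith)
      -- expand sinh (a ± s)
      have e1 : Real.sinh (a + s) = Real.sinh a * Real.cosh s + Real.cosh a * Real.sinh s :=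
        Real.sinh_add a s
      have e2 : Real.sinh (a - s) = Real.sinh a * Real.cosh s - Real.cosh a * Real.sinh s :=
        Real.sinh_sub a s
      -- from key2: s * sinh a * cosh s ≤ a * cosh a * sinh s
      have key3 : s * (Real.sinh a * Real.cosh s) ≤ a * (Real.cosh a * Real.sinh s) := by
        nlinarith [key2, e1, e2]
      -- then s * sinh (a+s) ≤ (a+s) * cosh a * sinh s
      have key4 : s * Real.sinh (a + s) ≤ (a + s) * (Real.cosh a * Real.sinh s) := by
        rw [e1]; nlinarith
      -- goal: 0 ≤ cosh a * sinh s - sinh r * (s / r)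
      rw [sub_nonneg]
      have h5 : Real.sinh r * (s / r) = s * Real.sinh r / r := by ring
      rw [h5, div_le_iff₀ hrpos]
      have has : 0 < a + s := by linarith
      nlinarith [mul_le_mul_of_nonneg_left key4 hrpos.le,
        mul_le_mul_of_nonneg_left key1 hs0.le]
  have h0 : Real.cosh a * Real.cosh 0 - Real.cosh (Real.sqrt (a ^ 2 + 0 ^ 2)) = 0 := by
    simp [Real.sqrt_sq ha]
  have := hmono (Set.mem_Icc.2 ⟨le_refl 0, ha⟩) (Set.mem_Icc.2 ⟨hb, hba⟩) hb
  simp only [h0] at this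
  linarith [this]

private lemma cosh_sqrt_le {a b : ℝ} (ha : 0 ≤ a) (hb : 0 ≤ b) :
    Real.cosh (Real.sqrt (a ^ 2 + b ^ 2)) ≤ Real.cosh a * Real.cosh b := by
  rcases le_total b a with h | h
  · exact cosh_sqrt_le_aux hb h
  · have := cosh_sqrt_le_aux ha h
    rw [add_comm (b ^ 2), mul_comm] at this
    exact this

private lemma cosh_le_one_add {r : ℝ} (hr : 0 ≤ r) :
    Real.cosh r ≤ 1 + r ^ 2 / 2 * Real.cosh r := by
  have e1 : Real.cosh r = 1 + 2 * Real.sinh (r / 2) ^ 2 := by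
    have := Real.cosh_two_mul (r / 2)
    have h2 : Real.cosh (r / 2) ^ 2 = Real.sinh (r / 2) ^ 2 + 1 := Real.cosh_sq (r / 2)
    have : Real.cosh r = Real.cosh (2 * (r / 2)) := by ring_nf
    rw [this, Real.cosh_two_mul, h2]; ring
  have hs : Real.sinh (r / 2) ≤ r / 2 * Real.cosh (r / 2) := sinh_le_mul_cosh (by linarith)
  have hs0 : 0 ≤ Real.sinh (r / 2) := Real.sinh_nonneg_iff.2 (by linarith)
  have hc2 : Real.cosh (r / 2) ^ 2 = Real.sinh (r / 2) ^ 2 + 1 := Real.cosh_sq _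
  nlinarith [mul_le_mul hs hs hs0 (by positivity : (0:ℝ) ≤ r / 2 * Real.cosh (r / 2)), hc2, e1, sq_nonneg r]

section Hilbert

variable {E : Type*} [NormedAddCommGroup E] [InnerProductSpace ℝ E]

private lemma cosh_pointwise {l : ℝ} (hl : 0 ≤ l) (w d : E) :
    Real.cosh (l * ‖w + d‖) + Real.cosh (l * ‖w - d‖) ≤
      2 * Real.cosh (l * ‖w‖) * Real.cosh (l * ‖d‖) ^ 2 := by
  have hpq : ‖w + d‖ * ‖w + d‖ + ‖w - d‖ * ‖w - d‖ = 2 * (‖w‖ * ‖w‖ + ‖d‖ * ‖d‖) :=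
    by simpa only [sq] using parallelogram_law_with_norm ℝ w d
  set p := ‖w + d‖ with hp
  set q := ‖w - d‖ with hq
  set u := ‖w‖ with hu
  set v := ‖d‖ with hv
  have hp0 : 0 ≤ p := norm_nonneg _
  have hq0 : 0 ≤ q := norm_nonneg _
  have hu0 : 0 ≤ u := norm_nonneg _
  have hv0 : 0 ≤ v := norm_nonneg _
  have hr0 : (0:ℝ) ≤ u ^ 2 + v ^ 2 := by positivity
  set r := Real.sqrt (u ^ 2 + v ^ 2) with hrdef
  have hr : 0 ≤ r := Real.sqrt_nonneg _
  have hsum : p + q ≤ 2 * r := by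
    have h1 : (p + q) ^ 2 ≤ (2 * r) ^ 2 := by
      have : r ^ 2 = u ^ 2 + v ^ 2 := Real.sq_sqrt hr0
      nlinarith [sq_nonneg (p - q)]
    calc p + q = Real.sqrt ((p + q) ^ 2) := (Real.sqrt_sq (by positivity)).symm
      _ ≤ Real.sqrt ((2 * r) ^ 2) := Real.sqrt_le_sqrt h1
      _ = 2 * r := Real.sqrt_sq (by positivity)
  have hdiff : |p - q| ≤ 2 * v := by
    calc |p - q| ≤ ‖(w + d) - (w - d)‖ := abs_norm_sub_norm_le _ _
      _ = ‖d + d‖ := by congr 1; abel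
      _ ≤ v + v := norm_add_le d d
      _ = 2 * v := by ring
  have hid : ∀ A B : ℝ, Real.cosh (A + B) + Real.cosh (A - B) =
      2 * Real.cosh A * Real.cosh B := by
    intro A B; rw [Real.cosh_add, Real.cosh_sub]; ring
  have e1 : l * p = l * (p + q) / 2 + l * (p - q) / 2 := by ring
  have e2 : l * q = l * (p + q) / 2 - l * (p - q) / 2 := by ring
  rw [e1, e2, hid]
  have hB : Real.cosh (l * (p - q) / 2) ≤ Real.cosh (l * v) := by
    rw [Real.cosh_le_cosh]
    rw [abs_of_nonneg (by positivity : (0:ℝ) ≤ l * v)]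
    have : |l * (p - q) / 2| = l * |p - q| / 2 := by
      rw [abs_div, abs_mul, abs_of_nonneg hl]
      simp
    rw [this]
    nlinarith
  have hA : Real.cosh (l * (p + q) / 2) ≤ Real.cosh (l * r) := by
    rw [Real.cosh_le_cosh]
    rw [abs_of_nonneg (by positivity : (0:ℝ) ≤ l * r),
      abs_of_nonneg (by positivity : (0:ℝ) ≤ l * (p + q) / 2)]
    nlinarith
  have hsq : Real.cosh (l * r) ≤ Real.cosh (l * u) * Real.cosh (l * v) := by
    have h := cosh_sqrt_le (mul_nonneg hl hu0) (mul_nonneg hl hv0)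
    have heq : Real.sqrt ((l * u) ^ 2 + (l * v) ^ 2) = l * r := by
      rw [show (l * u) ^ 2 + (l * v) ^ 2 = l ^ 2 * (u ^ 2 + v ^ 2) by ring,
        Real.sqrt_mul (by positivity), Real.sqrt_sq hl]
    rwa [heq] at h
  have c1 := Real.cosh_pos (l * (p + q) / 2)
  have c2 := Real.cosh_pos (l * v)
  have c3 := Real.cosh_pos (l * r)
  nlinarith [mul_le_mul hA hB (le_of_lt (Real.cosh_pos _)) c3.le,
    mul_le_mul_of_nonneg_right hsq c2.le]

end Hilbert


section Core

variable {E : Type*} [NormedAddCommGroup E] [InnerProductSpace ℝ E]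
  [MeasurableSpace E] [BorelSpace E] [SecondCountableTopology E]

private lemma meas_cosh_norm (l : ℝ) (w : E) :
    Measurable (fun z : E × E => ENNReal.ofReal (Real.cosh (l * ‖w + (z.1 - z.2)‖))) :=
  (ENNReal.continuous_ofReal.comp (Real.continuous_cosh.comp
    ((continuous_const.mul ((continuous_const.add
      (continuous_fst.sub continuous_snd)).norm))))).measurable

private lemma meas_cosh_sq (l : ℝ) :
    Measurable (fun z : E × E => ENNReal.ofReal (Real.cosh (l * ‖z.1 - z.2‖) ^ 2)) :=
  (ENNReal.continuous_ofReal.comp ((Real.continuous_cosh.comp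
    (continuous_const.mul (continuous_fst.sub continuous_snd).norm)).pow 2)).measurable

private lemma step_bound (μ : Measure E) [IsProbabilityMeasure μ] {l : ℝ} (hl : 0 ≤ l) (w : E) :
    ∫⁻ z : E × E, ENNReal.ofReal (Real.cosh (l * ‖w + (z.1 - z.2)‖)) ∂(μ.prod μ) ≤
      ENNReal.ofReal (Real.cosh (l * ‖w‖)) *
        ∫⁻ z : E × E, ENNReal.ofReal (Real.cosh (l * ‖z.1 - z.2‖) ^ 2) ∂(μ.prod μ) := by
  have hswap : ∫⁻ z : E × E, ENNReal.ofReal (Real.cosh (l * ‖w + (z.1 - z.2)‖)) ∂(μ.prod μ) =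
      ∫⁻ z : E × E, ENNReal.ofReal (Real.cosh (l * ‖w - (z.1 - z.2)‖)) ∂(μ.prod μ) := by
    calc ∫⁻ z : E × E, ENNReal.ofReal (Real.cosh (l * ‖w + (z.1 - z.2)‖)) ∂(μ.prod μ)
        = ∫⁻ z : E × E, ENNReal.ofReal (Real.cosh (l * ‖w + (z.1 - z.2)‖))
            ∂(Measure.map Prod.swap (μ.prod μ)) := by rw [Measure.prod_swap]
      _ = ∫⁻ z : E × E, ENNReal.ofReal
            (Real.cosh (l * ‖w + ((Prod.swap z).1 - (Prod.swap z).2)‖)) ∂(μ.prod μ) :=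
          lintegral_map (meas_cosh_norm l w) measurable_swap
      _ = ∫⁻ z : E × E, ENNReal.ofReal (Real.cosh (l * ‖w - (z.1 - z.2)‖)) ∂(μ.prod μ) := by
          apply lintegral_congr; intro z
          have he : w + ((Prod.swap z).1 - (Prod.swap z).2) = w - (z.1 - z.2) := by
            simp only [Prod.fst_swap, Prod.snd_swap]
            abel
          rw [he]
  have key : (2 : ℝ≥0∞) * ∫⁻ z : E × E,
      ENNReal.ofReal (Real.cosh (l * ‖w + (z.1 - z.2)‖)) ∂(μ.prod μ) ≤
      2 * (ENNReal.ofReal (Real.cosh (l * ‖w‖)) *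
        ∫⁻ z : E × E, ENNReal.ofReal (Real.cosh (l * ‖z.1 - z.2‖) ^ 2) ∂(μ.prod μ)) := by
    calc (2 : ℝ≥0∞) * ∫⁻ z : E × E,
        ENNReal.ofReal (Real.cosh (l * ‖w + (z.1 - z.2)‖)) ∂(μ.prod μ)
        = ∫⁻ z : E × E, (ENNReal.ofReal (Real.cosh (l * ‖w + (z.1 - z.2)‖)) +
            ENNReal.ofReal (Real.cosh (l * ‖w - (z.1 - z.2)‖))) ∂(μ.prod μ) := by
          rw [lintegral_add_left (meas_cosh_norm l w), two_mul, hswap]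
      _ ≤ ∫⁻ z : E × E, (2 * ENNReal.ofReal (Real.cosh (l * ‖w‖)) *
            ENNReal.ofReal (Real.cosh (l * ‖z.1 - z.2‖) ^ 2)) ∂(μ.prod μ) := by
          apply lintegral_mono
          intro z
          dsimp only
          rw [← ENNReal.ofReal_add (Real.cosh_pos _).le (Real.cosh_pos _).le]
          calc ENNReal.ofReal (Real.cosh (l * ‖w + (z.1 - z.2)‖) +
                Real.cosh (l * ‖w - (z.1 - z.2)‖))
              ≤ ENNReal.ofReal (2 * Real.cosh (l * ‖w‖) *
                  Real.cosh (l * ‖z.1 - z.2‖) ^ 2) :=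
                ENNReal.ofReal_le_ofReal (cosh_pointwise hl w (z.1 - z.2))
            _ = 2 * ENNReal.ofReal (Real.cosh (l * ‖w‖)) *
                  ENNReal.ofReal (Real.cosh (l * ‖z.1 - z.2‖) ^ 2) := by
                rw [ENNReal.ofReal_mul (by positivity), ENNReal.ofReal_mul (by norm_num)]
                norm_num
      _ = 2 * (ENNReal.ofReal (Real.cosh (l * ‖w‖)) *
            ∫⁻ z : E × E, ENNReal.ofReal (Real.cosh (l * ‖z.1 - z.2‖) ^ 2) ∂(μ.prod μ)) := by
          rw [lintegral_const_mul _ (meas_cosh_sq l), mul_assoc]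
  have h2 : (2 : ℝ≥0∞) ≠ 0 := by norm_num
  have h2' : (2 : ℝ≥0∞) ≠ ⊤ := by norm_num
  exact (ENNReal.mul_le_mul_iff_right h2 h2').1 key

end Core

section Core2

variable {E : Type*} [NormedAddCommGroup E] [InnerProductSpace ℝ E]
  [MeasurableSpace E] [BorelSpace E] [SecondCountableTopology E]

private lemma measF (l : ℝ) : Measurable (fun v : E => ENNReal.ofReal (Real.cosh (l * ‖v‖))) :=
  ENNReal.measurable_ofReal.comp (Real.continuous_cosh.measurable.comp
    (measurable_norm.const_mul l))

private lemma core_bound (μ : Measure E) [IsProbabilityMeasure μ] {l : ℝ} (hl : 0 ≤ l) :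
    ∀ (n : ℕ) (w : E),
      ∫⁻ z : (Fin n → E) × (Fin n → E),
        ENNReal.ofReal (Real.cosh (l * ‖w + ∑ i, (z.1 i - z.2 i)‖))
        ∂((Measure.pi fun _ : Fin n => μ).prod (Measure.pi fun _ : Fin n => μ)) ≤
      ENNReal.ofReal (Real.cosh (l * ‖w‖)) *
        (∫⁻ z : E × E, ENNReal.ofReal (Real.cosh (l * ‖z.1 - z.2‖) ^ 2) ∂(μ.prod μ)) ^ n := by
  intro n
  induction n with
  | zero =>
    intro w
    simp only [Finset.univ_eq_empty, Finset.sum_empty, add_zero, pow_zero, mul_one,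
      lintegral_const]
    simp
  | succ n ih =>
    intro w
    set Xn := Fin n → E
    set Pn : Measure Xn := Measure.pi fun _ : Fin n => μ with hPn
    set C : ℝ≥0∞ :=
      ∫⁻ z : E × E, ENNReal.ofReal (Real.cosh (l * ‖z.1 - z.2‖) ^ 2) ∂(μ.prod μ) with hC
    set F : E → ℝ≥0∞ := fun v => ENNReal.ofReal (Real.cosh (l * ‖v‖)) with hF
    have hFm : Measurable F := measF l
    set e := MeasurableEquiv.piFinSuccAbove (fun _ : Fin (n+1) => E) 0 with he
    have mp : MeasurePreserving (Prod.map e e)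
        ((Measure.pi fun _ : Fin (n+1) => μ).prod (Measure.pi fun _ : Fin (n+1) => μ))
        ((μ.prod Pn).prod (μ.prod Pn)) :=
      (measurePreserving_piFinSuccAbove (fun _ : Fin (n+1) => μ) 0).prod
        (measurePreserving_piFinSuccAbove (fun _ : Fin (n+1) => μ) 0)
    set g : (E × Xn) × (E × Xn) → ℝ≥0∞ :=
      fun p => F (w + (p.1.1 - p.2.1) + ∑ j, (p.1.2 j - p.2.2 j)) with hg
    have hgm : Measurable g := by
      apply hFm.comp
      have h1 : Measurable fun p : (E × Xn) × (E × Xn) => w + (p.1.1 - p.2.1) :=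
        (measurable_fst.fst.sub measurable_snd.fst).const_add w
      have h2 : Measurable fun p : (E × Xn) × (E × Xn) => ∑ j, (p.1.2 j - p.2.2 j) :=
        Finset.measurable_sum _ fun j _ =>
          ((measurable_pi_apply j).comp measurable_fst.snd).sub
            ((measurable_pi_apply j).comp measurable_snd.snd)
      exact h1.add h2
    have hsum : ∀ z : (Fin (n+1) → E) × (Fin (n+1) → E),
        ENNReal.ofReal (Real.cosh (l * ‖w + ∑ i, (z.1 i - z.2 i)‖)) = g (Prod.map e e z) := by
      intro z
      have : ∑ i, (z.1 i - z.2 i) =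
          (z.1 0 - z.2 0) + ∑ j, (z.1 (Fin.succAbove 0 j) - z.2 (Fin.succAbove 0 j)) :=
        Fin.sum_univ_succAbove (fun i => z.1 i - z.2 i) 0
      simp only [hg, hF, Prod.map, he, MeasurableEquiv.piFinSuccAbove_apply,
        Fin.insertNthEquiv, Equiv.coe_fn_symm_mk, Fin.removeNth]
      rw [this, add_assoc]
    calc ∫⁻ z : (Fin (n+1) → E) × (Fin (n+1) → E),
          ENNReal.ofReal (Real.cosh (l * ‖w + ∑ i, (z.1 i - z.2 i)‖))
          ∂((Measure.pi fun _ : Fin (n+1) => μ).prod (Measure.pi fun _ : Fin (n+1) => μ))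
        = ∫⁻ z, g (Prod.map e e z)
            ∂((Measure.pi fun _ : Fin (n+1) => μ).prod (Measure.pi fun _ : Fin (n+1) => μ)) :=
          lintegral_congr hsum
      _ = ∫⁻ p, g p ∂((μ.prod Pn).prod (μ.prod Pn)) := mp.lintegral_comp hgm
      _ = ∫⁻ p1, ∫⁻ p2, g (p1, p2) ∂(μ.prod Pn) ∂(μ.prod Pn) :=
          lintegral_prod _ hgm.aemeasurable
      _ = ∫⁻ a, ∫⁻ X, ∫⁻ p2, g ((a, X), p2) ∂(μ.prod Pn) ∂Pn ∂μ := by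
          rw [lintegral_prod _ hgm.lintegral_prod_right'.aemeasurable]
      _ = ∫⁻ a, ∫⁻ X, ∫⁻ b, ∫⁻ Y, g ((a, X), (b, Y)) ∂Pn ∂μ ∂Pn ∂μ := by
          apply lintegral_congr; intro a; apply lintegral_congr; intro X
          exact lintegral_prod _ (hgm.comp measurable_prodMk_left).aemeasurable
      _ = ∫⁻ a, ∫⁻ b, ∫⁻ X, ∫⁻ Y, g ((a, X), (b, Y)) ∂Pn ∂Pn ∂μ ∂μ := by
          apply lintegral_congr; intro a
          apply lintegral_lintegral_swap
          apply Measurable.aemeasurable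
          have hbase : Measurable fun r : (Xn × E) × Xn => g ((a, r.1.1), (r.1.2, r.2)) :=
            hgm.comp ((measurable_const.prodMk measurable_fst.fst).prodMk
              (measurable_fst.snd.prodMk measurable_snd))
          exact hbase.lintegral_prod_right'
      _ ≤ ∫⁻ a, ∫⁻ b, F (w + (a - b)) * C ^ n ∂μ ∂μ := by
          apply lintegral_mono; intro a; dsimp only; apply lintegral_mono; intro b
          have hconv : ∫⁻ X : Xn, ∫⁻ Y : Xn, g ((a, X), (b, Y)) ∂Pn ∂Pn =
              ∫⁻ z : Xn × Xn, ENNReal.ofReal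
                (Real.cosh (l * ‖(w + (a - b)) + ∑ j, (z.1 j - z.2 j)‖)) ∂(Pn.prod Pn) := by
            have haem : AEMeasurable (fun z : Xn × Xn => ENNReal.ofReal
                (Real.cosh (l * ‖(w + (a - b)) + ∑ j, (z.1 j - z.2 j)‖))) (Pn.prod Pn) := by
              apply Measurable.aemeasurable
              apply (measF l).comp
              apply Measurable.const_add
              exact Finset.measurable_sum _ fun j _ =>
                ((measurable_pi_apply j).comp measurable_fst).sub
                  ((measurable_pi_apply j).comp measurable_snd)
            rw [lintegral_prod _ haem]
          dsimp only
          rw [hconv]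
          exact ih (w + (a - b))
      _ = (∫⁻ z : E × E, ENNReal.ofReal (Real.cosh (l * ‖w + (z.1 - z.2)‖)) ∂(μ.prod μ)) *
            C ^ n := by
          have h1 : ∀ a : E, ∫⁻ b, F (w + (a - b)) * C ^ n ∂μ =
              (∫⁻ b, F (w + (a - b)) ∂μ) * C ^ n := fun a =>
            lintegral_mul_const _ (hFm.comp ((measurable_const.sub measurable_id).const_add w))
          simp_rw [h1]
          rw [lintegral_mul_const _ ((meas_cosh_norm l w).lintegral_prod_right')]
          rw [lintegral_prod _ (meas_cosh_norm l w).aemeasurable]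
      _ ≤ (ENNReal.ofReal (Real.cosh (l * ‖w‖)) * C) * C ^ n := by
          exact mul_le_mul_left (step_bound μ hl w) _
      _ = ENNReal.ofReal (Real.cosh (l * ‖w‖)) * C ^ (n + 1) := by
          rw [mul_assoc, ← pow_succ']
end Core2


private lemma convexOn_cosh : ConvexOn ℝ Set.univ Real.cosh := by
  have hexp : ConvexOn ℝ Set.univ Real.exp := convexOn_exp
  have hnegexp : ConvexOn ℝ Set.univ (fun x : ℝ => Real.exp (-x)) := by
    refine ⟨convex_univ, fun x _ y _ a b ha hb hab => ?_⟩
    have h := hexp.2 (Set.mem_univ (-x)) (Set.mem_univ (-y)) ha hb hab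
    simp only [smul_eq_mul] at h ⊢
    rw [show -(a * x + b * y) = a * -x + b * -y by ring]
    exact h
  have h : ConvexOn ℝ Set.univ (fun x : ℝ => (Real.exp x + Real.exp (-x)) / 2) := by
    have := hexp.add hnegexp
    refine ⟨convex_univ, fun x hx y hy a b ha hb hab => ?_⟩
    have h2 := this.2 hx hy ha hb hab
    simp only [smul_eq_mul, Pi.add_apply] at h2 ⊢
    linarith
  convert h using 1
  funext x
  exact Real.cosh_eq x

private lemma convexOn_cosh_norm {E : Type*} [NormedAddCommGroup E] [InnerProductSpace ℝ E]
    {l : ℝ} (hl : 0 ≤ l) (v : E) :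
    ConvexOn ℝ Set.univ (fun x : E => Real.cosh (l * ‖v - x‖)) := by
  refine ⟨convex_univ, fun x _ y _ a b ha hb hab => ?_⟩
  have h1 : ‖v - (a • x + b • y)‖ ≤ a * ‖v - x‖ + b * ‖v - y‖ := by
    have he : v - (a • x + b • y) = a • (v - x) + b • (v - y) := by
      calc v - (a • x + b • y) = (a + b) • v - (a • x + b • y) := by rw [hab, one_smul]
        _ = a • (v - x) + b • (v - y) := by rw [add_smul, smul_sub, smul_sub]; abel
    rw [he]
    calc ‖a • (v - x) + b • (v - y)‖ ≤ ‖a • (v - x)‖ + ‖b • (v - y)‖ := norm_add_le _ _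
      _ = a * ‖v - x‖ + b * ‖v - y‖ := by
          rw [norm_smul, norm_smul, Real.norm_of_nonneg ha, Real.norm_of_nonneg hb]
  have h2 : Real.cosh (l * ‖v - (a • x + b • y)‖) ≤
      Real.cosh (a * (l * ‖v - x‖) + b * (l * ‖v - y‖)) := by
    rw [Real.cosh_le_cosh]
    have hr : 0 ≤ a * (l * ‖v - x‖) + b * (l * ‖v - y‖) := by positivity
    rw [abs_of_nonneg (by positivity), abs_of_nonneg hr]
    calc l * ‖v - (a • x + b • y)‖ ≤ l * (a * ‖v - x‖ + b * ‖v - y‖) :=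
          mul_le_mul_of_nonneg_left h1 hl
      _ = a * (l * ‖v - x‖) + b * (l * ‖v - y‖) := by ring
  have h3 := convexOn_cosh.2 (Set.mem_univ (l * ‖v - x‖)) (Set.mem_univ (l * ‖v - y‖))
    ha hb hab
  simp only [smul_eq_mul] at h3 ⊢
  linarith

private lemma jensen_step {Ω : Type*} [MeasurableSpace Ω] (P : Measure Ω) [IsProbabilityMeasure P]
    {E : Type*} [NormedAddCommGroup E] [InnerProductSpace ℝ E] [CompleteSpace E]
    [MeasurableSpace E] [BorelSpace E] [SecondCountableTopology E]
    {l : ℝ} (hl : 0 ≤ l) (S : Ω → E) (hS : Integrable S P) (hS0 : ∫ ω, S ω ∂P = 0) (v : E) :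
    ENNReal.ofReal (Real.cosh (l * ‖v‖)) ≤
      ∫⁻ ω, ENNReal.ofReal (Real.cosh (l * ‖v - S ω‖)) ∂P := by
  set g : E → ℝ := fun x => Real.cosh (l * ‖v - x‖) with hgdef
  have hgc : Continuous g := Real.continuous_cosh.comp
    (continuous_const.mul (continuous_const.sub continuous_id).norm)
  rcases eq_top_or_lt_top (∫⁻ ω, ENNReal.ofReal (g (S ω)) ∂P) with htop | hfin
  · rw [htop]; exact le_top
  have hgS : AEStronglyMeasurable (fun ω => g (S ω)) P :=
    hgc.comp_aestronglyMeasurable hS.aestronglyMeasurable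
  have hgi : Integrable (fun ω => g (S ω)) P := by
    refine ⟨hgS, ?_⟩
    rw [hasFiniteIntegral_iff_ofReal (Filter.Eventually.of_forall fun ω => (Real.cosh_pos _).le)]
    exact hfin
  have hjen : g (∫ ω, S ω ∂P) ≤ ∫ ω, g (S ω) ∂P :=
    (convexOn_cosh_norm hl v).map_integral_le hgc.continuousOn isClosed_univ
      (Filter.Eventually.of_forall fun ω => Set.mem_univ _) hS hgi
  rw [hS0] at hjen
  have h0 : g 0 = Real.cosh (l * ‖v‖) := by simp [hgdef]
  rw [h0] at hjen
  calc ENNReal.ofReal (Real.cosh (l * ‖v‖)) ≤ ENNReal.ofReal (∫ ω, g (S ω) ∂P) :=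
        ENNReal.ofReal_le_ofReal hjen
    _ = ∫⁻ ω, ENNReal.ofReal (g (S ω)) ∂P :=
        ofReal_integral_eq_lintegral_ofReal hgi
          (Filter.Eventually.of_forall fun ω => (Real.cosh_pos _).le)

private lemma law_pi {Ω : Type*} [MeasurableSpace Ω] (P : Measure Ω) [IsProbabilityMeasure P]
    {E : Type*} [MeasurableSpace E] {n : ℕ} (Y : Fin n → Ω → E)
    (hY : iIndepFun Y P)
    (haem : ∀ i, AEMeasurable (Y i) P)
    (μ : Measure E) [IsProbabilityMeasure μ] (hid : ∀ i, P.map (Y i) = μ) :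
    P.map (fun ω i => Y i ω) = Measure.pi (fun _ : Fin n => μ) := by
  have hGaem : AEMeasurable (fun ω i => Y i ω) P := by
    refine ⟨fun ω i => (haem i).mk _ ω,
      measurable_pi_lambda _ (fun i => (haem i).measurable_mk), ?_⟩
    have hall : ∀ᵐ ω ∂P, ∀ i, Y i ω = (haem i).mk _ ω :=
      (MeasureTheory.ae_all_iff).2 fun i => (haem i).ae_eq_mk
    filter_upwards [hall] with ω h
    funext i
    exact h i
  refine (Measure.pi_eq fun s hs => ?_).symm
  rw [Measure.map_apply_of_aemeasurable hGaem (MeasurableSet.univ_pi hs)]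
  have hpre : (fun ω i => Y i ω) ⁻¹' (Set.univ.pi s) = ⋂ i ∈ Finset.univ, Y i ⁻¹' s i := by
    ext ω; simp [Set.mem_univ_pi]
  rw [hpre, hY.measure_inter_preimage_eq_mul Finset.univ (fun i _ => hs i)]
  apply Finset.prod_congr rfl
  intro i _
  rw [← hid i, Measure.map_apply_of_aemeasurable (haem i) (hs i)]

private lemma psi1_twice {Ω : Type*} [MeasurableSpace Ω] (P : Measure Ω)
    {Z : Ω → ℝ} (hne : (psi1Set P Z).Nonempty) (hK : 0 < psi1Norm P Z) :
    expMoment1 P Z (2 * psi1Norm P Z) ≤ 2 := by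
  set K := psi1Norm P Z with hKdef
  have hbdd : BddBelow (psi1Set P Z) := ⟨0, fun a ha => ha.1.le⟩
  have hlt : sInf (psi1Set P Z) < 2 * K := by
    have h : psi1Norm P Z < 2 * K := by linarith
    exact h
  obtain ⟨a, ha, haK⟩ := (csInf_lt_iff hbdd hne).1 hlt
  calc expMoment1 P Z (2 * K) ≤ expMoment1 P Z a := by
        apply lintegral_mono
        intro ω
        apply ENNReal.ofReal_le_ofReal
        apply Real.exp_le_exp.2
        gcongr
        all_goals first | exact ha.1 | exact haK.le | positivity
    _ ≤ 2 := ha.2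


private lemma key_real {l K : ℝ} (hl : 0 ≤ l) (hK : 0 < K) (hlK : l ≤ 1 / (8192 * K)) :
    ∀ q q1 q2 : ℝ, 0 ≤ q → q ≤ q1 + q2 → 0 ≤ q1 → 0 ≤ q2 →
    Real.cosh (l * q) ^ 2 ≤ 1 + 1024 * l ^ 2 * K ^ 2 *
      (Real.exp (q1 / (8 * K)) * Real.exp (q2 / (8 * K))) := by
  intro q q1 q2 hq hqsum hq1 hq2
  have cosh_le_exp : ∀ x : ℝ, 0 ≤ x → Real.cosh x ≤ Real.exp x := by
    intro x hx
    rw [Real.cosh_eq]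
    have := Real.exp_le_exp.2 (neg_le_self hx)
    linarith
  set r := 2 * (l * q) with hrdef
  have hr0 : 0 ≤ r := by positivity
  have hdouble : Real.cosh r = 2 * Real.cosh (l * q) ^ 2 - 1 := by
    rw [hrdef, Real.cosh_two_mul, Real.cosh_sq]; ring
  have hc1 : Real.cosh r ≤ 1 + r ^ 2 / 2 * Real.exp r := by
    have h1 : Real.cosh r ≤ 1 + r ^ 2 / 2 * Real.cosh r := cosh_le_one_add hr0
    nlinarith [cosh_le_exp r hr0, sq_nonneg r]
  -- r ≤ q / (16 * K)
  have hrq : r ≤ q / (16 * K) := by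
    rw [hrdef, div_eq_mul_inv]
    have h16 : (16 * K)⁻¹ = 512 * (1 / (8192 * K)) := by
      field_simp
      ring
    rw [mul_comm q]
    rw [h16]
    nlinarith [mul_le_mul_of_nonneg_right hlK hq]
  -- q ^ 2 ≤ 1024 * K^2 * exp (q / (16 * K))
  have hqsq : q ^ 2 ≤ 1024 * K ^ 2 * Real.exp (q / (16 * K)) := by
    set x := q / (16 * K) with hxdef
    have hx0 : 0 ≤ x := by positivity
    have hee : Real.exp (x / 2) * Real.exp (x / 2) = Real.exp x := by
      rw [← Real.exp_add]; ring_nf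
    have hx4 : x ^ 2 ≤ 4 * Real.exp x := by
      nlinarith [Real.add_one_le_exp (x / 2), hee, hx0, Real.exp_pos (x / 2)]
    have hqx : q = 16 * K * x := by
      rw [hxdef]; field_simp
    rw [hqx]
    nlinarith [hx4]
  have her : Real.exp r ≤ Real.exp (q / (16 * K)) := Real.exp_le_exp.2 hrq
  have hsplit : Real.exp (q / (16 * K)) * Real.exp (q / (16 * K)) =
      Real.exp (q / (8 * K)) := by
    rw [← Real.exp_add]
    congr 1
    field_simp
    ring
  have hmono : Real.exp (q / (8 * K)) ≤ Real.exp (q1 / (8 * K)) * Real.exp (q2 / (8 * K)) := by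
    rw [← Real.exp_add]
    apply Real.exp_le_exp.2
    rw [← add_div]
    gcongr
  -- assemble
  have hr2 : r ^ 2 / 2 = 2 * (l ^ 2 * q ^ 2) := by rw [hrdef]; ring
  have step1 : Real.cosh (l * q) ^ 2 ≤ 1 + l ^ 2 * q ^ 2 * Real.exp r := by
    have he : r ^ 2 / 2 * Real.exp r = 2 * (l ^ 2 * q ^ 2 * Real.exp r) := by
      rw [hrdef]; ring
    linarith [hc1, hdouble, he]
  have step2 : l ^ 2 * q ^ 2 * Real.exp r ≤
      l ^ 2 * (1024 * K ^ 2 * Real.exp (q / (16 * K))) * Real.exp (q / (16 * K)) := by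
    have e1 : l ^ 2 * q ^ 2 * Real.exp r ≤ l ^ 2 * q ^ 2 * Real.exp (q / (16 * K)) := by
      apply mul_le_mul_of_nonneg_left her (by positivity)
    have e2 : l ^ 2 * q ^ 2 * Real.exp (q / (16 * K)) ≤
        l ^ 2 * (1024 * K ^ 2 * Real.exp (q / (16 * K))) * Real.exp (q / (16 * K)) := by
      have := mul_le_mul_of_nonneg_right hqsq (Real.exp_pos (q / (16 * K))).le
      nlinarith [sq_nonneg l, Real.exp_pos (q / (16 * K))]
    linarith
  have step3 : l ^ 2 * (1024 * K ^ 2 * Real.exp (q / (16 * K))) * Real.exp (q / (16 * K)) =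
      1024 * l ^ 2 * K ^ 2 * Real.exp (q / (8 * K)) := by
    rw [← hsplit]; ring
  have step4 : 1024 * l ^ 2 * K ^ 2 * Real.exp (q / (8 * K)) ≤
      1024 * l ^ 2 * K ^ 2 * (Real.exp (q1 / (8 * K)) * Real.exp (q2 / (8 * K))) :=
    mul_le_mul_of_nonneg_left hmono (by positivity)
  linarith [step1, step2, step3 ▸ step2, step4]

private lemma aem_pi {Ω : Type*} [MeasurableSpace Ω] {P : Measure Ω}
    {E : Type*} [MeasurableSpace E] {n : ℕ} (Y : Fin n → Ω → E)
    (haem : ∀ i, AEMeasurable (Y i) P) : AEMeasurable (fun ω i => Y i ω) P := by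
  refine ⟨fun ω i => (haem i).mk _ ω,
    measurable_pi_lambda _ (fun i => (haem i).measurable_mk), ?_⟩
  have hall : ∀ᵐ ω ∂P, ∀ i, Y i ω = (haem i).mk _ ω :=
    (MeasureTheory.ae_all_iff).2 fun i => (haem i).ae_eq_mk
  filter_upwards [hall] with ω h
  funext i
  exact h i


/-- **Bernstein-type concentration for Hilbert-space-valued sums.**
There is a universal constant `c > 0` such that for every separable real Hilbert space `E`,
every i.i.d. sequence `Y₁, …, Yₙ` of `E`-valued random elements with Bochner mean zero and
`K := ‖‖Y₁‖‖_{ψ₁} < ∞`, and every `0 ≤ t ≤ K`,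
`P(‖(1/n) ∑ₖ Yₖ‖ ≥ t) ≤ 2 exp(−c n t² / K²)`. -/
theorem stmt_15 :
    ∃ c : ℝ, 0 < c ∧
      ∀ (E : Type) [NormedAddCommGroup E] [InnerProductSpace ℝ E] [CompleteSpace E]
        [TopologicalSpace.SeparableSpace E] [MeasurableSpace E] [BorelSpace E]
        (Ω : Type) [MeasurableSpace Ω] (P : Measure Ω) [IsProbabilityMeasure P]
        (n : ℕ) (hn : 0 < n) (Y : Fin n → Ω → E),
        iIndepFun Y P →
        (∀ k l, IdentDistrib (Y k) (Y l) P P) →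
        (∀ k, Integrable (Y k) P) →
        (∀ k, ∫ ω, Y k ω ∂P = 0) →
        (psi1Set P fun ω => ‖Y ⟨0, hn⟩ ω‖).Nonempty →
        ∀ t : ℝ, 0 ≤ t → t ≤ psi1Norm P (fun ω => ‖Y ⟨0, hn⟩ ω‖) →
          P {ω | t ≤ ‖(n : ℝ)⁻¹ • ∑ k, Y k ω‖} ≤
            ENNReal.ofReal (2 * Real.exp
              (-(c * n * t ^ 2 / (psi1Norm P fun ω => ‖Y ⟨0, hn⟩ ω‖) ^ 2))) := by
  refine ⟨(16384 : ℝ)⁻¹, by norm_num, ?_⟩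
  intro E _ _ _ _ _ _ Ω _ P _ n hn Y hind hident hint hmean hne t ht0 htK
  haveI : SecondCountableTopology E := UniformSpace.secondCountable_of_separable E
  set c : ℝ := (16384 : ℝ)⁻¹ with hcdef
  set K := psi1Norm P (fun ω => ‖Y ⟨0, hn⟩ ω‖) with hKdef
  rcases eq_or_lt_of_le ht0 with h0 | htpos
  · -- t = 0
    have : c * n * t ^ 2 / K ^ 2 = 0 := by rw [← h0]; simp
    rw [this]
    simp only [neg_zero, Real.exp_zero, mul_one]
    calc P {ω | t ≤ ‖(n : ℝ)⁻¹ • ∑ k, Y k ω‖} ≤ 1 := prob_le_one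
      _ ≤ ENNReal.ofReal 2 := by norm_num [ENNReal.one_le_ofReal]
  · -- t > 0
    have hKpos : 0 < K := lt_of_lt_of_le htpos htK
    set l := t / (8192 * K ^ 2) with hldef
    have hl : 0 ≤ l := by positivity
    have hlK : l ≤ 1 / (8192 * K) := by
      rw [hldef]
      rw [div_le_div_iff₀ (by positivity) (by positivity)]
      nlinarith [htK, hKpos]
    -- basic objects
    have haemY : ∀ i, AEMeasurable (Y i) P := fun i => (hint i).aemeasurable
    set μ : Measure E := P.map (Y ⟨0, hn⟩) with hμ
    haveI : IsProbabilityMeasure μ := Measure.isProbabilityMeasure_map (haemY _)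
    have hmapi : ∀ i, P.map (Y i) = μ := fun i => (hident i ⟨0, hn⟩).map_eq
    have hGaem : AEMeasurable (fun ω i => Y i ω) P := aem_pi Y haemY
    have hGlaw : P.map (fun ω i => Y i ω) = Measure.pi (fun _ : Fin n => μ) :=
      law_pi P Y hind haemY μ hmapi
    set S : Ω → E := fun ω => ∑ k, Y k ω with hSdef
    have hSint : Integrable S P := integrable_finset_sum _ fun k _ => hint k
    have hS0 : ∫ ω, S ω ∂P = 0 := by
      rw [hSdef, integral_finset_sum _ fun k _ => hint k]
      simp [hmean]
    have hSaem : AEMeasurable S P := hSint.aemeasurable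
    -- exponential moment on μ
    have hfm8 : Measurable (fun x : E => ENNReal.ofReal (Real.exp (‖x‖ / (8 * K)))) :=
      ENNReal.measurable_ofReal.comp (Real.continuous_exp.measurable.comp
        (measurable_norm.div_const _))
    have hexp8 : ∫⁻ x, ENNReal.ofReal (Real.exp (‖x‖ / (8 * K))) ∂μ ≤ 2 := by
      rw [hμ, lintegral_map' hfm8.aemeasurable (haemY _)]
      have h2 := psi1_twice P hne hKpos
      rw [expMoment1] at h2
      refine le_trans ?_ h2
      apply lintegral_mono; intro ω
      apply ENNReal.ofReal_le_ofReal
      apply Real.exp_le_exp.2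
      rw [abs_of_nonneg (norm_nonneg _)]
      gcongr
      all_goals linarith
    -- the key constant C and its bound
    set C : ℝ≥0∞ :=
      ∫⁻ z : E × E, ENNReal.ofReal (Real.cosh (l * ‖z.1 - z.2‖) ^ 2) ∂(μ.prod μ) with hCdef
    have hCbound : C ≤ ENNReal.ofReal (Real.exp (4096 * l ^ 2 * K ^ 2)) := by
      have hpt : ∀ z : E × E, ENNReal.ofReal (Real.cosh (l * ‖z.1 - z.2‖) ^ 2) ≤
          1 + ENNReal.ofReal (1024 * l ^ 2 * K ^ 2) *
            (ENNReal.ofReal (Real.exp (‖z.1‖ / (8 * K))) *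
             ENNReal.ofReal (Real.exp (‖z.2‖ / (8 * K)))) := by
        intro z
        have hre := key_real hl hKpos hlK ‖z.1 - z.2‖ ‖z.1‖ ‖z.2‖ (norm_nonneg _)
          (norm_sub_le _ _) (norm_nonneg _) (norm_nonneg _)
        calc ENNReal.ofReal (Real.cosh (l * ‖z.1 - z.2‖) ^ 2)
            ≤ ENNReal.ofReal (1 + 1024 * l ^ 2 * K ^ 2 *
                (Real.exp (‖z.1‖ / (8 * K)) * Real.exp (‖z.2‖ / (8 * K)))) :=
              ENNReal.ofReal_le_ofReal hre
          _ = 1 + ENNReal.ofReal (1024 * l ^ 2 * K ^ 2) *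
                (ENNReal.ofReal (Real.exp (‖z.1‖ / (8 * K))) *
                 ENNReal.ofReal (Real.exp (‖z.2‖ / (8 * K)))) := by
              rw [ENNReal.ofReal_add (by norm_num) (by positivity), ENNReal.ofReal_one,
                ENNReal.ofReal_mul (by positivity),
                ENNReal.ofReal_mul (Real.exp_pos _).le]
      have hmulm : Measurable (fun z : E × E =>
          ENNReal.ofReal (Real.exp (‖z.1‖ / (8 * K))) *
          ENNReal.ofReal (Real.exp (‖z.2‖ / (8 * K)))) :=
        (hfm8.comp measurable_fst).mul (hfm8.comp measurable_snd)
      calc C ≤ ∫⁻ z : E × E, (1 + ENNReal.ofReal (1024 * l ^ 2 * K ^ 2) *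
              (ENNReal.ofReal (Real.exp (‖z.1‖ / (8 * K))) *
               ENNReal.ofReal (Real.exp (‖z.2‖ / (8 * K))))) ∂(μ.prod μ) :=
            lintegral_mono hpt
        _ = 1 + ENNReal.ofReal (1024 * l ^ 2 * K ^ 2) *
              ((∫⁻ x, ENNReal.ofReal (Real.exp (‖x‖ / (8 * K))) ∂μ) *
               (∫⁻ x, ENNReal.ofReal (Real.exp (‖x‖ / (8 * K))) ∂μ)) := by
            rw [lintegral_add_left measurable_const, lintegral_const, measure_univ, mul_one,
              lintegral_const_mul _ hmulm,
              lintegral_prod_mul hfm8.aemeasurable hfm8.aemeasurable]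
        _ ≤ 1 + ENNReal.ofReal (1024 * l ^ 2 * K ^ 2) * (2 * 2) := by gcongr
        _ ≤ ENNReal.ofReal (Real.exp (4096 * l ^ 2 * K ^ 2)) := by
            have h4 : (2 : ℝ≥0∞) * 2 = ENNReal.ofReal 4 := by
              rw [ENNReal.ofReal_ofNat]; norm_num
            rw [h4, ← ENNReal.ofReal_mul (by positivity), ← ENNReal.ofReal_one,
              ← ENNReal.ofReal_add (by norm_num) (by positivity)]
            apply ENNReal.ofReal_le_ofReal
            have := Real.add_one_le_exp (4096 * l ^ 2 * K ^ 2)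
            nlinarith [this]
    -- Markov
    set ε : ℝ≥0∞ := ENNReal.ofReal (Real.exp (l * (n * t)) / 2) with hεdef
    have hε0 : ε ≠ 0 := by
      rw [hεdef]
      simp [ENNReal.ofReal_eq_zero, not_le]
      positivity
    have hεtop : ε ≠ ⊤ := ENNReal.ofReal_ne_top
    have hcoshSaem : AEMeasurable (fun ω => ENNReal.ofReal (Real.cosh (l * ‖S ω‖))) P :=
      (measF l).comp_aemeasurable hSaem
    have hMarkov : ε * P {ω | t ≤ ‖(n : ℝ)⁻¹ • ∑ k, Y k ω‖} ≤
        ∫⁻ ω, ENNReal.ofReal (Real.cosh (l * ‖S ω‖)) ∂P := by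
      have hsub : {ω | t ≤ ‖(n : ℝ)⁻¹ • ∑ k, Y k ω‖} ⊆
          {ω | ε ≤ ENNReal.ofReal (Real.cosh (l * ‖S ω‖))} := by
        intro ω hω
        simp only [Set.mem_setOf_eq] at hω ⊢
        have hn' : (0:ℝ) < n := Nat.cast_pos.2 hn
        have hnorm : ‖(n : ℝ)⁻¹ • S ω‖ = (n:ℝ)⁻¹ * ‖S ω‖ := by
          rw [norm_smul, Real.norm_of_nonneg (by positivity)]
        have hω' : t ≤ (n:ℝ)⁻¹ * ‖S ω‖ := by rw [← hnorm]; exact hω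
        have hnt : (n : ℝ) * t ≤ ‖S ω‖ := by
          calc (n:ℝ) * t ≤ (n:ℝ) * ((n:ℝ)⁻¹ * ‖S ω‖) := by nlinarith
            _ = ‖S ω‖ := by field_simp
        apply ENNReal.ofReal_le_ofReal
        have h1 : Real.exp (l * (n * t)) ≤ Real.exp (l * ‖S ω‖) := by
          apply Real.exp_le_exp.2
          rw [← mul_assoc]
          calc l * n * t = l * (n * t) := by ring
            _ ≤ l * ‖S ω‖ := mul_le_mul_of_nonneg_left hnt hl
        rw [Real.cosh_eq]
        have := (Real.exp_pos (-(l * ‖S ω‖))).le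
        linarith
      calc ε * P {ω | t ≤ ‖(n : ℝ)⁻¹ • ∑ k, Y k ω‖}
          ≤ ε * P {ω | ε ≤ ENNReal.ofReal (Real.cosh (l * ‖S ω‖))} :=
            mul_le_mul_right (measure_mono hsub) ε
        _ ≤ _ := mul_meas_ge_le_lintegral₀ hcoshSaem ε
    -- the chain
    have hbase2 : Measurable (fun z : (Fin n → E) × (Fin n → E) =>
        ENNReal.ofReal (Real.cosh (l * ‖∑ i, z.1 i - ∑ i, z.2 i‖))) :=
      (measF l).comp ((Finset.measurable_sum _ fun i _ =>
        (measurable_pi_apply i).comp measurable_fst).sub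
        (Finset.measurable_sum _ fun i _ => (measurable_pi_apply i).comp measurable_snd))
    have hbase3 : Measurable (fun z : (Fin n → E) × (Fin n → E) =>
        ENNReal.ofReal (Real.cosh (l * ‖(0:E) + ∑ i, (z.1 i - z.2 i)‖))) :=
      (measF l).comp (Measurable.const_add (Finset.measurable_sum _ fun i _ =>
        ((measurable_pi_apply i).comp measurable_fst).sub
        ((measurable_pi_apply i).comp measurable_snd)) _)
    have hH : ∀ v : E, Measurable (fun y : Fin n → E =>
        ENNReal.ofReal (Real.cosh (l * ‖v - ∑ i, y i‖))) := fun v =>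
      (measF l).comp (measurable_const.sub
        (Finset.measurable_sum _ fun i _ => measurable_pi_apply i))
    have houter : Measurable (fun x : Fin n → E => ∫⁻ y : Fin n → E,
        ENNReal.ofReal (Real.cosh (l * ‖∑ i, x i - ∑ i, y i‖))
        ∂(Measure.pi fun _ : Fin n => μ)) := hbase2.lintegral_prod_right'
    have hinner : ∀ v : E, ∫⁻ ω', ENNReal.ofReal (Real.cosh (l * ‖v - S ω'‖)) ∂P =
        ∫⁻ y : Fin n → E, ENNReal.ofReal (Real.cosh (l * ‖v - ∑ i, y i‖))
          ∂(Measure.pi fun _ : Fin n => μ) := by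
      intro v
      rw [← hGlaw, lintegral_map' ((hH v).aemeasurable) hGaem]
    have hchain : ∫⁻ ω, ENNReal.ofReal (Real.cosh (l * ‖S ω‖)) ∂P ≤
        ENNReal.ofReal (Real.exp (4096 * n * (l ^ 2 * K ^ 2))) := by
      calc ∫⁻ ω, ENNReal.ofReal (Real.cosh (l * ‖S ω‖)) ∂P
          ≤ ∫⁻ ω, ∫⁻ ω', ENNReal.ofReal (Real.cosh (l * ‖S ω - S ω'‖)) ∂P ∂P :=
            lintegral_mono fun ω => jensen_step P hl S hSint hS0 (S ω)
        _ = ∫⁻ ω, ∫⁻ y : Fin n → E, ENNReal.ofReal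
              (Real.cosh (l * ‖S ω - ∑ i, y i‖)) ∂(Measure.pi fun _ : Fin n => μ) ∂P :=
            lintegral_congr fun ω => hinner (S ω)
        _ = ∫⁻ x : Fin n → E, ∫⁻ y : Fin n → E, ENNReal.ofReal
              (Real.cosh (l * ‖∑ i, x i - ∑ i, y i‖)) ∂(Measure.pi fun _ : Fin n => μ)
              ∂(Measure.pi fun _ : Fin n => μ) := by
            have h := lintegral_map' houter.aemeasurable hGaem
            rw [hGlaw] at h
            exact h.symm
        _ = ∫⁻ z : (Fin n → E) × (Fin n → E), ENNReal.ofReal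
              (Real.cosh (l * ‖(0:E) + ∑ i, (z.1 i - z.2 i)‖))
              ∂((Measure.pi fun _ : Fin n => μ).prod (Measure.pi fun _ : Fin n => μ)) := by
            rw [lintegral_prod _ hbase3.aemeasurable]
            apply lintegral_congr; intro x; apply lintegral_congr; intro y
            rw [zero_add, Finset.sum_sub_distrib]
        _ ≤ ENNReal.ofReal (Real.cosh (l * ‖(0:E)‖)) * C ^ n := core_bound μ hl n 0
        _ = C ^ n := by simp
        _ ≤ ENNReal.ofReal (Real.exp (4096 * l ^ 2 * K ^ 2)) ^ n :=
            pow_le_pow_left' hCbound n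
        _ = ENNReal.ofReal (Real.exp (4096 * n * (l ^ 2 * K ^ 2))) := by
            rw [← ENNReal.ofReal_pow (Real.exp_pos _).le, ← Real.exp_nat_mul]
            congr 2
            ring
    -- wrap up
    calc P {ω | t ≤ ‖(n : ℝ)⁻¹ • ∑ k, Y k ω‖}
        = ε⁻¹ * (ε * P {ω | t ≤ ‖(n : ℝ)⁻¹ • ∑ k, Y k ω‖}) := by
          rw [← mul_assoc, ENNReal.inv_mul_cancel hε0 hεtop, one_mul]
      _ ≤ ε⁻¹ * ENNReal.ofReal (Real.exp (4096 * n * (l ^ 2 * K ^ 2))) :=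
          mul_le_mul_right (hMarkov.trans hchain) _
      _ = ENNReal.ofReal (2 * Real.exp (-(c * n * t ^ 2 / K ^ 2))) := by
          rw [hεdef, ← ENNReal.ofReal_inv_of_pos (by positivity),
            ← ENNReal.ofReal_mul (by positivity)]
          congr 1
          have hsplit : 4096 * (n:ℝ) * (l ^ 2 * K ^ 2) =
              l * (n * t) + (-(c * n * t ^ 2 / K ^ 2)) := by
            rw [hldef, hcdef]
            field_simp
            ring
          rw [hsplit, Real.exp_add]
          have hz : Real.exp (l * (n * t)) ≠ 0 := (Real.exp_pos _).ne'
          field_simp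
end
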